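/- arXiv:2401.08997 — 2 statements merged into one kernel-verified Lean document; each statement's English description precedes it below -/
import Mathlib

section
/- For every real number k and every complex number z with Im z > 0, P_k(z − 5/12) + P_k(z − 1/12) + P_k(z + 1/12) + P_k(z + 5/12) = (2^k + 1)·( 2^{1−k}·P_k(2z) + 4^{1−k}·P_k(8z) + 6^{1−k}·P_k(18z) + 12^{1−k}·P_k(72z) ) − ((2^k + 1)^2 − 2^{k−1})·( 4^{1−k}·P_k(4z) − 12^{1−k}·(3^k + 1)·P_k(12z) + 12^{1−k}·P_k(36z) ) − 6^{1−k}·(2^k + 1)·(3^k + 1)·( P_k(6z) + 2^{1−k}·P_k(24z) ). -/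
open Complex Real

/-- P_k(z) = Σ_{n=1}^∞ n^{−k} · e^{2πinz}/(1 − e^{2πinz}), for real k and Im z > 0. -/
noncomputable def P (k : ℝ) (z : ℂ) : ℂ :=
  ∑' n : ℕ+, (n : ℂ) ^ (-(k : ℂ)) *
    (Complex.exp (2 * Real.pi * Complex.I * n * z) /
      (1 - Complex.exp (2 * Real.pi * Complex.I * n * z)))

namespace Twelve

noncomputable def G (k : ℝ) (z : ℂ) (p : ℕ+ × ℕ+) : ℂ :=
  (p.1 : ℂ) ^ (-(k : ℂ)) * Complex.exp (2 * Real.pi * Complex.I * p.1 * p.2 * z)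

lemma norm_term (k : ℝ) (w : ℂ) (n m : ℕ+) :
    ‖(n : ℂ) ^ (-(k : ℂ)) * Complex.exp (2 * Real.pi * Complex.I * n * m * w)‖
      = (n : ℝ) ^ (-k) * Real.exp (-(2 * Real.pi * n * m * w.im)) := by
  rw [norm_mul]
  congr 1
  · rw [show ((n : ℕ+) : ℂ) = (((n : ℕ) : ℝ) : ℂ) by push_cast; ring,
      Complex.norm_cpow_eq_rpow_re_of_pos (by exact_mod_cast n.pos)]
    norm_num
  · rw [Complex.norm_exp]
    congr 1
    have : (2 * (Real.pi : ℂ) * Complex.I * n * m * w)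
        = (((2 * Real.pi * n * m : ℝ)) : ℂ) * (w * Complex.I) := by push_cast; ring
    rw [this]
    simp [Complex.mul_re]

lemma summable_aux (k c : ℝ) (hc : 0 < c) :
    Summable (fun n : ℕ+ => (n : ℝ) ^ (-k) * Real.exp (-(c * n))) := by
  have hr : ‖Real.exp (-c)‖ < 1 := by
    rw [Real.norm_eq_abs, abs_of_pos (Real.exp_pos _)]
    rw [Real.exp_lt_one_iff]; linarith
  have h0 : Summable (fun n : ℕ => (n : ℝ) ^ (⌈|k|⌉₊) * Real.exp (-c) ^ n) :=
    summable_pow_mul_geometric_of_norm_lt_one _ hr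
  have h1 : Summable (fun n : ℕ+ => ((n : ℕ) : ℝ) ^ (⌈|k|⌉₊) * Real.exp (-c) ^ (n : ℕ)) :=
    h0.comp_injective (fun a b h => PNat.coe_injective h)
  apply Summable.of_nonneg_of_le _ _ h1
  · intro n
    positivity
  · intro n
    have h2 : Real.exp (-(c * n)) = Real.exp (-c) ^ (n : ℕ) := by
      rw [← Real.exp_nat_mul]; congr 1; ring
    rw [h2]
    apply mul_le_mul_of_nonneg_right _ (by positivity)
    have hn1 : (1 : ℝ) ≤ (n : ℝ) := by exact_mod_cast n.one_le
    calc (n : ℝ) ^ (-k) ≤ (n : ℝ) ^ ((⌈|k|⌉₊ : ℝ)) := by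
          apply Real.rpow_le_rpow_of_exponent_le hn1
          calc -k ≤ |k| := neg_le_abs k
            _ ≤ ⌈|k|⌉₊ := Nat.le_ceil _
      _ = (n : ℝ) ^ (⌈|k|⌉₊) := by
          rw [Real.rpow_natCast]

lemma summable_norm (k : ℝ) (w : ℂ) (hw : 0 < w.im) :
    Summable (fun p : ℕ+ × ℕ+ => (p.1 : ℝ) ^ (-k) * Real.exp (-(2 * Real.pi * p.1 * p.2 * w.im))) := by
  have hpy : 0 < Real.pi * w.im := by positivity
  have hf : Summable (fun n : ℕ+ => (n : ℝ) ^ (-k) * Real.exp (-(Real.pi * w.im * n))) :=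
    summable_aux k _ hpy
  have hg : Summable (fun n : ℕ+ => Real.exp (-(Real.pi * w.im * n))) := by
    have := summable_aux 0 _ hpy
    simpa using this
  have base := hf.mul_of_nonneg hg (fun n => by positivity) (fun n => (Real.exp_pos _).le)
  apply Summable.of_nonneg_of_le (fun p => by positivity) _ base
  intro p
  rw [mul_assoc ((p.1:ℝ) ^ (-k)), ← Real.exp_add]
  apply mul_le_mul_of_nonneg_left _ (by positivity)
  apply Real.exp_le_exp.2
  have h1 : (1:ℝ) ≤ (p.1 : ℝ) := by exact_mod_cast p.1.one_le
  have h2 : (1:ℝ) ≤ (p.2 : ℝ) := by exact_mod_cast p.2.one_le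
  have hπ : (0:ℝ) < Real.pi := Real.pi_pos
  have key : (p.1:ℝ) + p.2 ≤ 2 * p.1 * p.2 := by nlinarith
  nlinarith [mul_le_mul_of_nonneg_left key (mul_pos hπ hw).le]


lemma summable_G (k : ℝ) (w : ℂ) (hw : 0 < w.im) :
    Summable (fun p : ℕ+ × ℕ+ =>
      (p.1 : ℂ) ^ (-(k : ℂ)) * Complex.exp (2 * Real.pi * Complex.I * p.1 * p.2 * w)) :=
  Summable.of_norm ((summable_norm k w hw).congr (fun p => (norm_term k w p.1 p.2).symm))

lemma re_aux (c : ℝ) (w : ℂ) : ((c : ℂ) * Complex.I * w).re = -(c * w.im) := by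
  simp [Complex.mul_re]

lemma P_eq (k : ℝ) (w : ℂ) (hw : 0 < w.im) :
    P k w = ∑' p : ℕ+ × ℕ+,
      (p.1 : ℂ) ^ (-(k : ℂ)) * Complex.exp (2 * Real.pi * Complex.I * p.1 * p.2 * w) := by
  rw [Summable.tsum_prod' (summable_G k w hw) (fun n => (summable_G k w hw).prod_factor n)]
  unfold P
  apply tsum_congr
  intro n
  have hlt : ‖Complex.exp (2 * Real.pi * Complex.I * n * w)‖ < 1 := by
    rw [Complex.norm_exp, Real.exp_lt_one_iff]
    have h : (2 * (Real.pi : ℂ) * Complex.I * n * w) = ((2 * Real.pi * n : ℝ) : ℂ) * Complex.I * w := by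
      push_cast; ring
    rw [h, re_aux]
    have h1 : (0:ℝ) < (n:ℝ) := by exact_mod_cast n.pos
    have h2 := Real.pi_pos
    have : 0 < 2 * Real.pi * (n:ℝ) * w.im := by positivity
    linarith
  set x := Complex.exp (2 * Real.pi * Complex.I * n * w) with hx
  have e : ∀ m : ℕ+, Complex.exp (2 * Real.pi * Complex.I * n * m * w) = x ^ (m : ℕ) := by
    intro m
    rw [hx, ← Complex.exp_nat_mul]
    congr 1
    push_cast
    ring
  have hgeom : x / (1 - x) = ∑' m : ℕ+, Complex.exp (2 * Real.pi * Complex.I * n * m * w) := by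
    have hsum : ∑' m : ℕ, x ^ m = (1 - x)⁻¹ := tsum_geometric_of_norm_lt_one hlt
    calc x / (1 - x) = x * ∑' m : ℕ, x ^ m := by rw [hsum, div_eq_mul_inv]
      _ = ∑' m : ℕ, x ^ (m + 1) := by
          rw [← tsum_mul_left]
          exact tsum_congr fun m => by rw [pow_succ]; ring
      _ = ∑' m : ℕ+, x ^ ((Equiv.pnatEquivNat m) + 1) := (Equiv.pnatEquivNat.tsum_eq _).symm
      _ = ∑' m : ℕ+, x ^ (m : ℕ) := tsum_congr fun m => by
          congr 1
          simp [Equiv.pnatEquivNat]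
      _ = ∑' m : ℕ+, Complex.exp (2 * Real.pi * Complex.I * n * m * w) :=
          tsum_congr fun m => (e m).symm
  rw [hgeom]
  exact (tsum_mul_left).symm


noncomputable def Ecoef (t : ℤ) (x : ℕ) : ℂ := Complex.exp (2 * Real.pi * Complex.I * t * x / 12)

lemma P_shift (k : ℝ) (z : ℂ) (hz : 0 < z.im) (t : ℤ) :
    P k (z + (t : ℂ) / 12) = ∑' p : ℕ+ × ℕ+, Ecoef t ((p.1 : ℕ) * (p.2 : ℕ)) * G k z p := by
  have him : 0 < (z + (t : ℂ) / 12).im := by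
    have : ((t : ℂ) / 12).im = 0 := by
      simp [Complex.div_im]
    rw [Complex.add_im, this, add_zero]
    exact hz
  rw [P_eq k _ him]
  apply tsum_congr
  intro p
  have harg : 2 * (Real.pi:ℂ) * Complex.I * p.1 * p.2 * (z + (t:ℂ)/12)
      = 2 * Real.pi * Complex.I * t * (((p.1:ℕ) * (p.2:ℕ) : ℕ) : ℂ) / 12
        + 2 * Real.pi * Complex.I * p.1 * p.2 * z := by
    push_cast
    ring
  rw [Ecoef, G, harg, Complex.exp_add]
  ring

noncomputable def ind (c d : ℕ+) (p : ℕ+ × ℕ+) : ℂ :=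
  if (c : ℕ) ∣ (p.1 : ℕ) ∧ (d : ℕ) ∣ (p.2 : ℕ) then 1 else 0

noncomputable def W (k : ℝ) (z : ℂ) (c d : ℕ+) : ℂ := ∑' p : ℕ+ × ℕ+, ind c d p * G k z p

lemma P_mono (k : ℝ) (z : ℂ) (hz : 0 < z.im) (c d : ℕ+) (u b : ℂ)
    (hu : u = (((c : ℕ)) : ℂ) ^ (-(k : ℂ))) (hb : (((c : ℕ)) : ℂ) * (((d : ℕ)) : ℂ) = b) :
    u * P k (b * z) = W k z c d := by
  subst hu
  subst hb
  have him : 0 < ((((c : ℕ)) : ℂ) * (((d : ℕ)) : ℂ) * z).im := by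
    have h1 : ((((c:ℕ)):ℂ) * (((d:ℕ)):ℂ) * z).im = ((c:ℕ):ℝ) * ((d:ℕ):ℝ) * z.im := by
      simp [Complex.mul_im, Complex.mul_re]
    rw [h1]
    have hc : (0:ℝ) < ((c:ℕ):ℝ) := by exact_mod_cast c.pos
    have hd : (0:ℝ) < ((d:ℕ):ℝ) := by exact_mod_cast d.pos
    positivity
  rw [P_eq k _ him, ← tsum_mul_left]
  have key : ∀ q : ℕ+ × ℕ+,
      ((c:ℕ):ℂ) ^ (-(k:ℂ)) * ((q.1 : ℂ) ^ (-(k:ℂ)) *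
        Complex.exp (2 * Real.pi * Complex.I * q.1 * q.2 * (((c:ℕ):ℂ) * ((d:ℕ):ℂ) * z)))
      = ind c d (c * q.1, d * q.2) * G k z (c * q.1, d * q.2) := by
    intro q
    have hind : ind c d (c * q.1, d * q.2) = 1 := by
      rw [ind, if_pos]
      constructor
      · exact ⟨(q.1 : ℕ), by simp [PNat.mul_coe]⟩
      · exact ⟨(q.2 : ℕ), by simp [PNat.mul_coe]⟩
    rw [hind, one_mul, G]
    have hc1 : ((((c * q.1 : ℕ+) : ℕ)) : ℂ) = (((c:ℕ) : ℕ) * ((q.1:ℕ) : ℕ) : ℂ) := by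
      push_cast [PNat.mul_coe]; ring
    have hd1 : ((((d * q.2 : ℕ+) : ℕ)) : ℂ) = ((d:ℕ):ℂ) * ((q.2:ℕ):ℂ) := by
      push_cast [PNat.mul_coe]; ring
    rw [hc1, hd1, Complex.natCast_mul_natCast_cpow]
    have hexp : 2 * (Real.pi:ℂ) * Complex.I * (((c:ℕ):ℂ) * ((q.1:ℕ):ℂ)) * (((d:ℕ):ℂ) * ((q.2:ℕ):ℂ)) * z
        = 2 * Real.pi * Complex.I * ((q.1:ℕ):ℂ) * ((q.2:ℕ):ℂ) * (((c:ℕ):ℂ) * ((d:ℕ):ℂ) * z) := by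
      ring
    rw [hexp]
    ring
  rw [tsum_congr key]
  unfold W
  have hinj : Function.Injective (fun q : ℕ+ × ℕ+ => (c * q.1, d * q.2)) := by
    intro q1 q2 h
    rw [Prod.ext_iff] at h ⊢
    obtain ⟨h1, h2⟩ := h
    exact ⟨mul_left_cancel h1, mul_left_cancel h2⟩
  apply hinj.tsum_eq (f := fun p : ℕ+ × ℕ+ => ind c d p * G k z p)
  intro p hp

  have hcdvd : (c : ℕ) ∣ (p.1 : ℕ) ∧ (d : ℕ) ∣ (p.2 : ℕ) := by
    by_contra hcon
    apply hp
    show ind c d p * G k z p = 0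
    rw [ind, if_neg hcon, zero_mul]
  obtain ⟨⟨a, ha⟩, ⟨b, hbb⟩⟩ := hcdvd
  have hapos : 0 < a := by
    rcases Nat.eq_zero_or_pos a with h | h
    · exfalso; have := p.1.pos; subst h; simp at ha
    · exact h
  have hbpos : 0 < b := by
    rcases Nat.eq_zero_or_pos b with h | h
    · exfalso; have := p.2.pos; subst h; simp at hbb
    · exact h
  refine ⟨(⟨a, hapos⟩, ⟨b, hbpos⟩), ?_⟩
  show (c * ⟨a, hapos⟩, d * ⟨b, hbpos⟩) = p
  rw [Prod.ext_iff]
  constructor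
  · apply PNat.coe_injective
    exact (PNat.mul_coe c ⟨a, hapos⟩).trans ha.symm
  · apply PNat.coe_injective
    exact (PNat.mul_coe d ⟨b, hbpos⟩).trans hbb.symm


lemma pairE (x : ℝ) : Complex.exp ((x:ℂ) * Complex.I) + Complex.exp (-((x:ℂ) * Complex.I))
    = 2 * ((Real.cos x : ℝ) : ℂ) := by
  have h : -((x:ℂ) * Complex.I) = ((-x : ℝ):ℂ) * Complex.I := by push_cast; ring
  rw [h, Complex.exp_mul_I, Complex.exp_mul_I, Complex.ofReal_neg, Complex.cos_neg,
    Complex.sin_neg, ← Complex.ofReal_cos]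
  ring

lemma Epair (t : ℤ) (r : ℕ) : Ecoef t r + Ecoef (-t) r
    = 2 * ((Real.cos ((t*r : ℤ) * Real.pi / 6) : ℝ) : ℂ) := by
  have h1 : (2 * (Real.pi:ℂ) * Complex.I * (t:ℂ) * (r:ℂ) / 12)
      = (((t*r : ℤ) * Real.pi / 6 : ℝ) : ℂ) * Complex.I := by push_cast; ring
  have h2 : (2 * (Real.pi:ℂ) * Complex.I * ((-t : ℤ):ℂ) * (r:ℂ) / 12)
      = -((((t*r : ℤ) * Real.pi / 6 : ℝ) : ℂ) * Complex.I) := by push_cast; ring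
  rw [Ecoef, Ecoef, h1, h2, pairE]

lemma Squad (r : ℕ) : Ecoef (-5) r + Ecoef (-1) r + Ecoef 1 r + Ecoef 5 r
    = 2 * ((Real.cos ((5*r : ℤ) * Real.pi / 6) : ℝ) : ℂ)
      + 2 * ((Real.cos ((1*r : ℤ) * Real.pi / 6) : ℝ) : ℂ) := by
  rw [← Epair 5 r, ← Epair 1 r]
  ring

lemma Sq0 : Ecoef (-5) 0 + Ecoef (-1) 0 + Ecoef 1 0 + Ecoef 5 0 = (4 : ℂ) := by
  rw [Squad]
  norm_num

lemma Sq1 : Ecoef (-5) 1 + Ecoef (-1) 1 + Ecoef 1 1 + Ecoef 5 1 = (0 : ℂ) := by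
  rw [Squad]
  rw [show ((5*((1:ℕ):ℤ):ℤ):ℝ) * Real.pi / 6 = (π - π/6) + (0:ℤ)*(2*Real.pi) by push_cast; ring]
  rw [show ((1*((1:ℕ):ℤ):ℤ):ℝ) * Real.pi / 6 = π/6 + (0:ℤ)*(2*Real.pi) by push_cast; ring]
  rw [Real.cos_add_int_mul_two_pi, Real.cos_add_int_mul_two_pi]
  simp only [Real.cos_neg, Real.cos_pi_sub, Real.cos_pi_div_six, Real.cos_pi_div_three,
    Real.cos_pi_div_two, Real.cos_zero, Real.cos_pi]
  push_cast
  ring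

lemma Sq2 : Ecoef (-5) 2 + Ecoef (-1) 2 + Ecoef 1 2 + Ecoef 5 2 = (2 : ℂ) := by
  rw [Squad]
  rw [show ((5*((2:ℕ):ℤ):ℤ):ℝ) * Real.pi / 6 = (-(π/3)) + (1:ℤ)*(2*Real.pi) by push_cast; ring]
  rw [show ((1*((2:ℕ):ℤ):ℤ):ℝ) * Real.pi / 6 = π/3 + (0:ℤ)*(2*Real.pi) by push_cast; ring]
  rw [Real.cos_add_int_mul_two_pi, Real.cos_add_int_mul_two_pi]
  simp only [Real.cos_neg, Real.cos_pi_sub, Real.cos_pi_div_six, Real.cos_pi_div_three,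
    Real.cos_pi_div_two, Real.cos_zero, Real.cos_pi]
  push_cast
  ring

lemma Sq3 : Ecoef (-5) 3 + Ecoef (-1) 3 + Ecoef 1 3 + Ecoef 5 3 = (0 : ℂ) := by
  rw [Squad]
  rw [show ((5*((3:ℕ):ℤ):ℤ):ℝ) * Real.pi / 6 = π/2 + (1:ℤ)*(2*Real.pi) by push_cast; ring]
  rw [show ((1*((3:ℕ):ℤ):ℤ):ℝ) * Real.pi / 6 = π/2 + (0:ℤ)*(2*Real.pi) by push_cast; ring]
  rw [Real.cos_add_int_mul_two_pi, Real.cos_add_int_mul_two_pi]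
  simp only [Real.cos_neg, Real.cos_pi_sub, Real.cos_pi_div_six, Real.cos_pi_div_three,
    Real.cos_pi_div_two, Real.cos_zero, Real.cos_pi]
  push_cast
  ring

lemma Sq4 : Ecoef (-5) 4 + Ecoef (-1) 4 + Ecoef 1 4 + Ecoef 5 4 = (-2 : ℂ) := by
  rw [Squad]
  rw [show ((5*((4:ℕ):ℤ):ℤ):ℝ) * Real.pi / 6 = (-(π - π/3)) + (2:ℤ)*(2*Real.pi) by push_cast; ring]
  rw [show ((1*((4:ℕ):ℤ):ℤ):ℝ) * Real.pi / 6 = (π - π/3) + (0:ℤ)*(2*Real.pi) by push_cast; ring]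
  rw [Real.cos_add_int_mul_two_pi, Real.cos_add_int_mul_two_pi]
  simp only [Real.cos_neg, Real.cos_pi_sub, Real.cos_pi_div_six, Real.cos_pi_div_three,
    Real.cos_pi_div_two, Real.cos_zero, Real.cos_pi]
  push_cast
  ring

lemma Sq5 : Ecoef (-5) 5 + Ecoef (-1) 5 + Ecoef 1 5 + Ecoef 5 5 = (0 : ℂ) := by
  rw [Squad]
  rw [show ((5*((5:ℕ):ℤ):ℤ):ℝ) * Real.pi / 6 = π/6 + (2:ℤ)*(2*Real.pi) by push_cast; ring]
  rw [show ((1*((5:ℕ):ℤ):ℤ):ℝ) * Real.pi / 6 = (π - π/6) + (0:ℤ)*(2*Real.pi) by push_cast; ring]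
  rw [Real.cos_add_int_mul_two_pi, Real.cos_add_int_mul_two_pi]
  simp only [Real.cos_neg, Real.cos_pi_sub, Real.cos_pi_div_six, Real.cos_pi_div_three,
    Real.cos_pi_div_two, Real.cos_zero, Real.cos_pi]
  push_cast
  ring

lemma Sq6 : Ecoef (-5) 6 + Ecoef (-1) 6 + Ecoef 1 6 + Ecoef 5 6 = (-4 : ℂ) := by
  rw [Squad]
  rw [show ((5*((6:ℕ):ℤ):ℤ):ℝ) * Real.pi / 6 = π + (2:ℤ)*(2*Real.pi) by push_cast; ring]
  rw [show ((1*((6:ℕ):ℤ):ℤ):ℝ) * Real.pi / 6 = π + (0:ℤ)*(2*Real.pi) by push_cast; ring]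
  rw [Real.cos_add_int_mul_two_pi, Real.cos_add_int_mul_two_pi]
  simp only [Real.cos_neg, Real.cos_pi_sub, Real.cos_pi_div_six, Real.cos_pi_div_three,
    Real.cos_pi_div_two, Real.cos_zero, Real.cos_pi]
  push_cast
  ring

lemma Sq7 : Ecoef (-5) 7 + Ecoef (-1) 7 + Ecoef 1 7 + Ecoef 5 7 = (0 : ℂ) := by
  rw [Squad]
  rw [show ((5*((7:ℕ):ℤ):ℤ):ℝ) * Real.pi / 6 = (-(π/6)) + (3:ℤ)*(2*Real.pi) by push_cast; ring]
  rw [show ((1*((7:ℕ):ℤ):ℤ):ℝ) * Real.pi / 6 = (-(π - π/6)) + (1:ℤ)*(2*Real.pi) by push_cast; ring]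
  rw [Real.cos_add_int_mul_two_pi, Real.cos_add_int_mul_two_pi]
  simp only [Real.cos_neg, Real.cos_pi_sub, Real.cos_pi_div_six, Real.cos_pi_div_three,
    Real.cos_pi_div_two, Real.cos_zero, Real.cos_pi]
  push_cast
  ring

lemma Sq8 : Ecoef (-5) 8 + Ecoef (-1) 8 + Ecoef 1 8 + Ecoef 5 8 = (-2 : ℂ) := by
  rw [Squad]
  rw [show ((5*((8:ℕ):ℤ):ℤ):ℝ) * Real.pi / 6 = (π - π/3) + (3:ℤ)*(2*Real.pi) by push_cast; ring]
  rw [show ((1*((8:ℕ):ℤ):ℤ):ℝ) * Real.pi / 6 = (-(π - π/3)) + (1:ℤ)*(2*Real.pi) by push_cast; ring]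
  rw [Real.cos_add_int_mul_two_pi, Real.cos_add_int_mul_two_pi]
  simp only [Real.cos_neg, Real.cos_pi_sub, Real.cos_pi_div_six, Real.cos_pi_div_three,
    Real.cos_pi_div_two, Real.cos_zero, Real.cos_pi]
  push_cast
  ring

lemma Sq9 : Ecoef (-5) 9 + Ecoef (-1) 9 + Ecoef 1 9 + Ecoef 5 9 = (0 : ℂ) := by
  rw [Squad]
  rw [show ((5*((9:ℕ):ℤ):ℤ):ℝ) * Real.pi / 6 = (-(π/2)) + (4:ℤ)*(2*Real.pi) by push_cast; ring]
  rw [show ((1*((9:ℕ):ℤ):ℤ):ℝ) * Real.pi / 6 = (-(π/2)) + (1:ℤ)*(2*Real.pi) by push_cast; ring]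
  rw [Real.cos_add_int_mul_two_pi, Real.cos_add_int_mul_two_pi]
  simp only [Real.cos_neg, Real.cos_pi_sub, Real.cos_pi_div_six, Real.cos_pi_div_three,
    Real.cos_pi_div_two, Real.cos_zero, Real.cos_pi]
  push_cast
  ring

lemma Sq10 : Ecoef (-5) 10 + Ecoef (-1) 10 + Ecoef 1 10 + Ecoef 5 10 = (2 : ℂ) := by
  rw [Squad]
  rw [show ((5*((10:ℕ):ℤ):ℤ):ℝ) * Real.pi / 6 = π/3 + (4:ℤ)*(2*Real.pi) by push_cast; ring]
  rw [show ((1*((10:ℕ):ℤ):ℤ):ℝ) * Real.pi / 6 = (-(π/3)) + (1:ℤ)*(2*Real.pi) by push_cast; ring]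
  rw [Real.cos_add_int_mul_two_pi, Real.cos_add_int_mul_two_pi]
  simp only [Real.cos_neg, Real.cos_pi_sub, Real.cos_pi_div_six, Real.cos_pi_div_three,
    Real.cos_pi_div_two, Real.cos_zero, Real.cos_pi]
  push_cast
  ring

lemma Sq11 : Ecoef (-5) 11 + Ecoef (-1) 11 + Ecoef 1 11 + Ecoef 5 11 = (0 : ℂ) := by
  rw [Squad]
  rw [show ((5*((11:ℕ):ℤ):ℤ):ℝ) * Real.pi / 6 = (-(π - π/6)) + (5:ℤ)*(2*Real.pi) by push_cast; ring]
  rw [show ((1*((11:ℕ):ℤ):ℤ):ℝ) * Real.pi / 6 = (-(π/6)) + (1:ℤ)*(2*Real.pi) by push_cast; ring]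
  rw [Real.cos_add_int_mul_two_pi, Real.cos_add_int_mul_two_pi]
  simp only [Real.cos_neg, Real.cos_pi_sub, Real.cos_pi_div_six, Real.cos_pi_div_three,
    Real.cos_pi_div_two, Real.cos_zero, Real.cos_pi]
  push_cast
  ring


lemma Ecoef_decomp (t : ℤ) (q r : ℕ) : Ecoef t (r + 12*q) = Ecoef t r := by
  rw [Ecoef, Ecoef]
  have key : 2*(Real.pi:ℂ)*Complex.I*t*((r + 12*q : ℕ):ℂ)/12
      = 2*Real.pi*Complex.I*t*(r:ℂ)/12 + ((t*(q:ℕ) : ℤ):ℂ)*(2*Real.pi*Complex.I) := by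
    push_cast
    ring
  rw [key, Complex.exp_add, Complex.exp_int_mul_two_pi_mul_I, mul_one]

lemma Ecoef_mod (t : ℤ) (x : ℕ) : Ecoef t x = Ecoef t (x % 12) := by
  conv_lhs => rw [← Nat.mod_add_div x 12]
  exact Ecoef_decomp t (x / 12) (x % 12)

def SInt : ℕ → ℤ
  | 0 => 4 | 2 => 2 | 4 => -2 | 6 => -4 | 8 => -2 | 10 => 2 | _ => 0

lemma SqAll (r : ℕ) (hr : r < 12) :
    Ecoef (-5) r + Ecoef (-1) r + Ecoef 1 r + Ecoef 5 r = ((SInt r : ℤ) : ℂ) := by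
  interval_cases r
  · rw [Sq0]; norm_num [SInt]
  · rw [Sq1]; norm_num [SInt]
  · rw [Sq2]; norm_num [SInt]
  · rw [Sq3]; norm_num [SInt]
  · rw [Sq4]; norm_num [SInt]
  · rw [Sq5]; norm_num [SInt]
  · rw [Sq6]; norm_num [SInt]
  · rw [Sq7]; norm_num [SInt]
  · rw [Sq8]; norm_num [SInt]
  · rw [Sq9]; norm_num [SInt]
  · rw [Sq10]; norm_num [SInt]
  · rw [Sq11]; norm_num [SInt]

def RInt (a b : ℕ) : ℤ :=
  (2*(if 1 ∣ a ∧ 2 ∣ b then (1:ℤ) else 0) + 2*(if 2 ∣ a ∧ 1 ∣ b then (1:ℤ) else 0)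
    + 4*(if 2 ∣ a ∧ 4 ∣ b then (1:ℤ) else 0) + 4*(if 4 ∣ a ∧ 2 ∣ b then (1:ℤ) else 0)
    + 6*(if 3 ∣ a ∧ 6 ∣ b then (1:ℤ) else 0) + 6*(if 6 ∣ a ∧ 3 ∣ b then (1:ℤ) else 0)
    + 12*(if 6 ∣ a ∧ 12 ∣ b then (1:ℤ) else 0) + 12*(if 12 ∣ a ∧ 6 ∣ b then (1:ℤ) else 0))
  - (4*(if 1 ∣ a ∧ 4 ∣ b then (1:ℤ) else 0) + 6*(if 2 ∣ a ∧ 2 ∣ b then (1:ℤ) else 0)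
    + 4*(if 4 ∣ a ∧ 1 ∣ b then (1:ℤ) else 0))
  + (12*(if 1 ∣ a ∧ 12 ∣ b then (1:ℤ) else 0) + 12*(if 3 ∣ a ∧ 4 ∣ b then (1:ℤ) else 0)
    + 18*(if 2 ∣ a ∧ 6 ∣ b then (1:ℤ) else 0) + 18*(if 6 ∣ a ∧ 2 ∣ b then (1:ℤ) else 0)
    + 12*(if 4 ∣ a ∧ 3 ∣ b then (1:ℤ) else 0) + 12*(if 12 ∣ a ∧ 1 ∣ b then (1:ℤ) else 0))
  - (12*(if 3 ∣ a ∧ 12 ∣ b then (1:ℤ) else 0) + 18*(if 6 ∣ a ∧ 6 ∣ b then (1:ℤ) else 0)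
    + 12*(if 12 ∣ a ∧ 3 ∣ b then (1:ℤ) else 0))
  - (6*(if 1 ∣ a ∧ 6 ∣ b then (1:ℤ) else 0) + 6*(if 2 ∣ a ∧ 3 ∣ b then (1:ℤ) else 0)
    + 6*(if 3 ∣ a ∧ 2 ∣ b then (1:ℤ) else 0) + 6*(if 6 ∣ a ∧ 1 ∣ b then (1:ℤ) else 0))
  - (12*(if 2 ∣ a ∧ 12 ∣ b then (1:ℤ) else 0) + 12*(if 4 ∣ a ∧ 6 ∣ b then (1:ℤ) else 0)
    + 12*(if 6 ∣ a ∧ 4 ∣ b then (1:ℤ) else 0) + 12*(if 12 ∣ a ∧ 2 ∣ b then (1:ℤ) else 0))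

lemma keyInt : ∀ a b : Fin 12, SInt ((a.1 * b.1) % 12) = RInt a.1 b.1 := by decide

lemma pointwise (p : ℕ+ × ℕ+) :
    Ecoef (-5) ((p.1:ℕ) * (p.2:ℕ)) + Ecoef (-1) ((p.1:ℕ) * (p.2:ℕ))
      + Ecoef 1 ((p.1:ℕ) * (p.2:ℕ)) + Ecoef 5 ((p.1:ℕ) * (p.2:ℕ))
    = 2*ind 1 2 p + 2*ind 2 1 p + 4*ind 2 4 p + 4*ind 4 2 p
        + 6*ind 3 6 p + 6*ind 6 3 p + 12*ind 6 12 p + 12*ind 12 6 p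
      - (4*ind 1 4 p + 6*ind 2 2 p + 4*ind 4 1 p)
      + (12*ind 1 12 p + 12*ind 3 4 p + 18*ind 2 6 p + 18*ind 6 2 p + 12*ind 4 3 p + 12*ind 12 1 p)
      - (12*ind 3 12 p + 18*ind 6 6 p + 12*ind 12 3 p)
      - (6*ind 1 6 p + 6*ind 2 3 p + 6*ind 3 2 p + 6*ind 6 1 p)
      - (12*ind 2 12 p + 12*ind 4 6 p + 12*ind 6 4 p + 12*ind 12 2 p) := by
  have ha : (p.1:ℕ) % 12 < 12 := Nat.mod_lt _ (by norm_num)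
  have hb : (p.2:ℕ) % 12 < 12 := Nat.mod_lt _ (by norm_num)
  rw [Ecoef_mod (-5), Ecoef_mod (-1), Ecoef_mod 1, Ecoef_mod 5, Nat.mul_mod,
    SqAll _ (Nat.mod_lt _ (by norm_num)), keyInt ⟨_, ha⟩ ⟨_, hb⟩]
  simp only [ind, PNat.val_ofNat, PNat.one_coe]
  have hdvd : ∀ c : ℕ, c ∣ 12 → ∀ n : ℕ, (c ∣ n) = (c ∣ n % 12) :=
    fun c hc n => propext (Nat.dvd_mod_iff hc).symm
  simp only [hdvd 2 (by norm_num) (p.1:ℕ), hdvd 3 (by norm_num) (p.1:ℕ),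
    hdvd 4 (by norm_num) (p.1:ℕ), hdvd 6 (by norm_num) (p.1:ℕ), hdvd 12 (by norm_num) (p.1:ℕ),
    hdvd 2 (by norm_num) (p.2:ℕ), hdvd 3 (by norm_num) (p.2:ℕ), hdvd 4 (by norm_num) (p.2:ℕ),
    hdvd 6 (by norm_num) (p.2:ℕ), hdvd 12 (by norm_num) (p.2:ℕ)]
  rw [RInt]
  push_cast [apply_ite (Int.cast : ℤ → ℂ)]
  simp only [Nat.one_dvd, true_and, and_true]

lemma norm_G (k : ℝ) (z : ℂ) (p : ℕ+ × ℕ+) :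
    ‖G k z p‖ = (p.1 : ℝ) ^ (-k) * Real.exp (-(2 * Real.pi * p.1 * p.2 * z.im)) :=
  norm_term k z p.1 p.2

lemma norm_Ecoef (t : ℤ) (x : ℕ) : ‖Ecoef t x‖ = 1 := by
  rw [Ecoef, Complex.norm_exp,
    show (2*(Real.pi:ℂ)*Complex.I*t*x/12) = ((2*Real.pi*t*x/12 : ℝ):ℂ)*Complex.I by push_cast; ring]
  have h : (((2*Real.pi*t*x/12 : ℝ):ℂ)*Complex.I).re = 0 := by simp [Complex.mul_re]
  rw [h, Real.exp_zero]

lemma summable_E (k : ℝ) (z : ℂ) (hz : 0 < z.im) (t : ℤ) :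
    Summable (fun p : ℕ+ × ℕ+ => Ecoef t ((p.1:ℕ) * (p.2:ℕ)) * G k z p) := by
  apply Summable.of_norm
  apply Summable.of_nonneg_of_le (fun p => norm_nonneg _) _ (summable_norm k z hz)
  intro p
  rw [norm_mul, norm_Ecoef, one_mul, norm_G]

lemma summable_I (k : ℝ) (z : ℂ) (hz : 0 < z.im) (c d : ℕ+) :
    Summable (fun p : ℕ+ × ℕ+ => ind c d p * G k z p) := by
  apply Summable.of_norm
  apply Summable.of_nonneg_of_le (fun p => norm_nonneg _) _ (summable_norm k z hz)
  intro p
  rw [norm_mul, ← norm_G k z p]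
  have h : ‖ind c d p‖ ≤ 1 := by
    rw [ind]
    split <;> simp
  calc ‖ind c d p‖ * ‖G k z p‖ ≤ 1 * ‖G k z p‖ :=
        mul_le_mul_of_nonneg_right h (norm_nonneg _)
    _ = ‖G k z p‖ := one_mul _

lemma hasSum_shift (k : ℝ) (z : ℂ) (hz : 0 < z.im) (t : ℤ) :
    HasSum (fun p : ℕ+ × ℕ+ => Ecoef t ((p.1:ℕ) * (p.2:ℕ)) * G k z p)
      (P k (z + (t : ℂ) / 12)) := by
  rw [P_shift k z hz t]
  exact (summable_E k z hz t).hasSum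

lemma hasSum_W (k : ℝ) (z : ℂ) (hz : 0 < z.im) (c d : ℕ+) :
    HasSum (fun p : ℕ+ × ℕ+ => ind c d p * G k z p) (W k z c d) :=
  (summable_I k z hz c d).hasSum

lemma Lgen (k a : ℝ) (ha : 0 < a) :
    ((a ^ (1-k) : ℝ) : ℂ) = (a:ℂ) * (((a:ℂ)) ^ (k:ℂ))⁻¹ := by
  rw [show (1-k) = 1 + (-k) from by ring, Real.rpow_add ha, Real.rpow_one, Complex.ofReal_mul,
    Complex.ofReal_cpow ha.le, Complex.ofReal_neg, Complex.cpow_neg]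

end Twelve

set_option maxHeartbeats 2000000 in
theorem twelvefold (k : ℝ) (z : ℂ) (hz : 0 < z.im) :
    P k (z - 5 / 12) + P k (z - 1 / 12) + P k (z + 1 / 12) + P k (z + 5 / 12) =
      ((((2 : ℝ) ^ k : ℝ) : ℂ) + 1) *
          ((((2 : ℝ) ^ (1 - k) : ℝ) : ℂ) * P k (2 * z)
            + (((4 : ℝ) ^ (1 - k) : ℝ) : ℂ) * P k (8 * z)
            + (((6 : ℝ) ^ (1 - k) : ℝ) : ℂ) * P k (18 * z)
            + (((12 : ℝ) ^ (1 - k) : ℝ) : ℂ) * P k (72 * z))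
        - (((((2 : ℝ) ^ k : ℝ) : ℂ) + 1) ^ 2 - (((2 : ℝ) ^ (k - 1) : ℝ) : ℂ)) *
            ((((4 : ℝ) ^ (1 - k) : ℝ) : ℂ) * P k (4 * z)
              - (((12 : ℝ) ^ (1 - k) : ℝ) : ℂ) * ((((3 : ℝ) ^ k : ℝ) : ℂ) + 1) * P k (12 * z)
              + (((12 : ℝ) ^ (1 - k) : ℝ) : ℂ) * P k (36 * z))
        - (((6 : ℝ) ^ (1 - k) : ℝ) : ℂ) * ((((2 : ℝ) ^ k : ℝ) : ℂ) + 1) *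
            ((((3 : ℝ) ^ k : ℝ) : ℂ) + 1) *
            (P k (6 * z) + (((2 : ℝ) ^ (1 - k) : ℝ) : ℂ) * P k (24 * z)) := by
  have hX2 : ((2:ℂ)^(k:ℂ)) ≠ 0 := by simp [Complex.cpow_eq_zero_iff]
  have hX3 : ((3:ℂ)^(k:ℂ)) ≠ 0 := by simp [Complex.cpow_eq_zero_iff]
  have M4 : (4:ℂ)^(k:ℂ) = (2:ℂ)^(k:ℂ) * (2:ℂ)^(k:ℂ) := by
    rw [show (4:ℂ) = ((2:ℕ):ℂ)*((2:ℕ):ℂ) by norm_num, Complex.natCast_mul_natCast_cpow]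
    norm_num
  have M6 : (6:ℂ)^(k:ℂ) = (2:ℂ)^(k:ℂ) * (3:ℂ)^(k:ℂ) := by
    rw [show (6:ℂ) = ((2:ℕ):ℂ)*((3:ℕ):ℂ) by norm_num, Complex.natCast_mul_natCast_cpow]
    norm_num
  have M12 : (12:ℂ)^(k:ℂ) = (2:ℂ)^(k:ℂ) * (2:ℂ)^(k:ℂ) * (3:ℂ)^(k:ℂ) := by
    rw [show (12:ℂ) = ((4:ℕ):ℂ)*((3:ℕ):ℂ) by norm_num, Complex.natCast_mul_natCast_cpow,
      show ((4:ℕ):ℂ) = (4:ℂ) by norm_num, show ((3:ℕ):ℂ) = (3:ℂ) by norm_num, M4]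
  have L1 : (((2:ℝ)^k : ℝ):ℂ) = (2:ℂ)^(k:ℂ) := by
    rw [Complex.ofReal_cpow (by norm_num : (0:ℝ) ≤ 2)]; norm_num
  have L2 : (((3:ℝ)^k : ℝ):ℂ) = (3:ℂ)^(k:ℂ) := by
    rw [Complex.ofReal_cpow (by norm_num : (0:ℝ) ≤ 3)]; norm_num
  have L3 : (((2:ℝ)^(1-k) : ℝ):ℂ) = 2 * ((2:ℂ)^(k:ℂ))⁻¹ := by
    rw [Twelve.Lgen k 2 (by norm_num)]; norm_num
  have L4 : (((4:ℝ)^(1-k) : ℝ):ℂ) = 4 * (((2:ℂ)^(k:ℂ))⁻¹ * ((2:ℂ)^(k:ℂ))⁻¹) := by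
    rw [Twelve.Lgen k 4 (by norm_num), show (((4:ℝ)):ℂ) = (4:ℂ) by norm_num, M4, mul_inv]
  have L5 : (((6:ℝ)^(1-k) : ℝ):ℂ) = 6 * (((2:ℂ)^(k:ℂ))⁻¹ * ((3:ℂ)^(k:ℂ))⁻¹) := by
    rw [Twelve.Lgen k 6 (by norm_num), show (((6:ℝ)):ℂ) = (6:ℂ) by norm_num, M6, mul_inv]
  have L6 : (((12:ℝ)^(1-k) : ℝ):ℂ) = 12 * (((2:ℂ)^(k:ℂ))⁻¹ * ((2:ℂ)^(k:ℂ))⁻¹ * ((3:ℂ)^(k:ℂ))⁻¹) := by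
    rw [Twelve.Lgen k 12 (by norm_num), show (((12:ℝ)):ℂ) = (12:ℂ) by norm_num, M12, mul_inv, mul_inv]
  have L7 : (((2:ℝ)^(k-1) : ℝ):ℂ) = (2:ℂ)^(k:ℂ) * 2⁻¹ := by
    have h : (2:ℝ)^(k-1) = (2:ℝ)^k * 2⁻¹ := by
      rw [show k-1 = k + (-1) from by ring, Real.rpow_add (by norm_num : (0:ℝ) < 2),
        Real.rpow_neg_one]
    rw [h, Complex.ofReal_mul, L1]; norm_num
  have r2 : (2:ℂ)^(k:ℂ) * ((2:ℂ)^(k:ℂ))⁻¹ = 1 := mul_inv_cancel₀ hX2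
  have r3 : (3:ℂ)^(k:ℂ) * ((3:ℂ)^(k:ℂ))⁻¹ = 1 := mul_inv_cancel₀ hX3
  have u1 : (1:ℂ) = (((1:ℕ+):ℕ):ℂ)^(-(k:ℂ)) := by norm_num
  have u2 : ((2:ℂ)^(k:ℂ))⁻¹ = (((2:ℕ+):ℕ):ℂ)^(-(k:ℂ)) := by
    rw [show ((((2:ℕ+):ℕ)):ℂ) = (2:ℂ) by norm_num, Complex.cpow_neg]
  have u3 : ((3:ℂ)^(k:ℂ))⁻¹ = (((3:ℕ+):ℕ):ℂ)^(-(k:ℂ)) := by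
    rw [show ((((3:ℕ+):ℕ)):ℂ) = (3:ℂ) by norm_num, Complex.cpow_neg]
  have u4 : ((2:ℂ)^(k:ℂ))⁻¹ * ((2:ℂ)^(k:ℂ))⁻¹ = (((4:ℕ+):ℕ):ℂ)^(-(k:ℂ)) := by
    rw [show ((((4:ℕ+):ℕ)):ℂ) = (4:ℂ) by norm_num, Complex.cpow_neg, M4, mul_inv]
  have u6 : ((2:ℂ)^(k:ℂ))⁻¹ * ((3:ℂ)^(k:ℂ))⁻¹ = (((6:ℕ+):ℕ):ℂ)^(-(k:ℂ)) := by
    rw [show ((((6:ℕ+):ℕ)):ℂ) = (6:ℂ) by norm_num, Complex.cpow_neg, M6, mul_inv]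
  have u12 : ((2:ℂ)^(k:ℂ))⁻¹ * ((2:ℂ)^(k:ℂ))⁻¹ * ((3:ℂ)^(k:ℂ))⁻¹ = (((12:ℕ+):ℕ):ℂ)^(-(k:ℂ)) := by
    rw [show ((((12:ℕ+):ℕ)):ℂ) = (12:ℂ) by norm_num, Complex.cpow_neg, M12, mul_inv, mul_inv]
  have h1 : ((((2:ℝ)^k : ℝ):ℂ) + 1) * ((((2:ℝ)^(1-k) : ℝ):ℂ) * P k (2*z))
      = 2 * Twelve.W k z 1 2 + 2 * Twelve.W k z 2 1 := by
    rw [← Twelve.P_mono k z hz 1 2 _ 2 u1 (by norm_num),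
      ← Twelve.P_mono k z hz 2 1 _ 2 u2 (by norm_num), L1, L3]
    linear_combination ((2:ℂ)*(P k (2*z))) * r2 + (0:ℂ) * r3
  have h2 : ((((2:ℝ)^k : ℝ):ℂ) + 1) * ((((4:ℝ)^(1-k) : ℝ):ℂ) * P k (8*z))
      = 4 * Twelve.W k z 2 4 + 4 * Twelve.W k z 4 2 := by
    rw [← Twelve.P_mono k z hz 2 4 _ 8 u2 (by norm_num),
      ← Twelve.P_mono k z hz 4 2 _ 8 u4 (by norm_num), L1, L4]
    linear_combination ((4:ℂ)*(((2:ℂ)^(k:ℂ))⁻¹)*(P k (8*z))) * r2 + (0:ℂ) * r3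
  have h3 : ((((2:ℝ)^k : ℝ):ℂ) + 1) * ((((6:ℝ)^(1-k) : ℝ):ℂ) * P k (18*z))
      = 6 * Twelve.W k z 3 6 + 6 * Twelve.W k z 6 3 := by
    rw [← Twelve.P_mono k z hz 3 6 _ 18 u3 (by norm_num),
      ← Twelve.P_mono k z hz 6 3 _ 18 u6 (by norm_num), L1, L5]
    linear_combination ((6:ℂ)*(((3:ℂ)^(k:ℂ))⁻¹)*(P k (18*z))) * r2 + (0:ℂ) * r3
  have h4 : ((((2:ℝ)^k : ℝ):ℂ) + 1) * ((((12:ℝ)^(1-k) : ℝ):ℂ) * P k (72*z))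
      = 12 * Twelve.W k z 6 12 + 12 * Twelve.W k z 12 6 := by
    rw [← Twelve.P_mono k z hz 6 12 _ 72 u6 (by norm_num),
      ← Twelve.P_mono k z hz 12 6 _ 72 u12 (by norm_num), L1, L6]
    linear_combination ((12:ℂ)*(((2:ℂ)^(k:ℂ))⁻¹)*(((3:ℂ)^(k:ℂ))⁻¹)*(P k (72*z))) * r2 + (0:ℂ) * r3
  have h5 : (((((2:ℝ)^k : ℝ):ℂ) + 1)^2 - (((2:ℝ)^(k-1) : ℝ):ℂ)) * ((((4:ℝ)^(1-k) : ℝ):ℂ) * P k (4*z))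
      = 4 * Twelve.W k z 1 4 + 6 * Twelve.W k z 2 2 + 4 * Twelve.W k z 4 1 := by
    rw [← Twelve.P_mono k z hz 1 4 _ 4 u1 (by norm_num),
      ← Twelve.P_mono k z hz 2 2 _ 4 u2 (by norm_num),
      ← Twelve.P_mono k z hz 4 1 _ 4 u4 (by norm_num), L1, L4, L7]
    linear_combination ((4:ℂ)*(P k (4*z)) + (6:ℂ)*(((2:ℂ)^(k:ℂ))⁻¹)*(P k (4*z)) + (4:ℂ)*((2:ℂ)^(k:ℂ))*(((2:ℂ)^(k:ℂ))⁻¹)*(P k (4*z))) * r2 + (0:ℂ) * r3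
  have h6 : (((((2:ℝ)^k : ℝ):ℂ) + 1)^2 - (((2:ℝ)^(k-1) : ℝ):ℂ))
        * ((((12:ℝ)^(1-k) : ℝ):ℂ) * ((((3:ℝ)^k : ℝ):ℂ) + 1) * P k (12*z))
      = 12 * Twelve.W k z 1 12 + 12 * Twelve.W k z 3 4 + 18 * Twelve.W k z 2 6
        + 18 * Twelve.W k z 6 2 + 12 * Twelve.W k z 4 3 + 12 * Twelve.W k z 12 1 := by
    rw [← Twelve.P_mono k z hz 1 12 _ 12 u1 (by norm_num),
      ← Twelve.P_mono k z hz 3 4 _ 12 u3 (by norm_num),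
      ← Twelve.P_mono k z hz 2 6 _ 12 u2 (by norm_num),
      ← Twelve.P_mono k z hz 6 2 _ 12 u6 (by norm_num),
      ← Twelve.P_mono k z hz 4 3 _ 12 u4 (by norm_num),
      ← Twelve.P_mono k z hz 12 1 _ 12 u12 (by norm_num), L1, L2, L6, L7]
    linear_combination ((12:ℂ)*(((3:ℂ)^(k:ℂ))⁻¹)*(P k (12*z)) + (12:ℂ)*((3:ℂ)^(k:ℂ))*(((3:ℂ)^(k:ℂ))⁻¹)*(P k (12*z)) + (18:ℂ)*(((2:ℂ)^(k:ℂ))⁻¹)*(((3:ℂ)^(k:ℂ))⁻¹)*(P k (12*z)) + (18:ℂ)*(((2:ℂ)^(k:ℂ))⁻¹)*((3:ℂ)^(k:ℂ))*(((3:ℂ)^(k:ℂ))⁻¹)*(P k (12*z)) + (12:ℂ)*((2:ℂ)^(k:ℂ))*(((2:ℂ)^(k:ℂ))⁻¹)*(((3:ℂ)^(k:ℂ))⁻¹)*(P k (12*z)) + (12:ℂ)*((2:ℂ)^(k:ℂ))*(((2:ℂ)^(k:ℂ))⁻¹)*((3:ℂ)^(k:ℂ))*(((3:ℂ)^(k:ℂ))⁻¹)*(P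 k (12*z))) * r2 + ((12:ℂ)*(P k (12*z)) + (18:ℂ)*(((2:ℂ)^(k:ℂ))⁻¹)*(P k (12*z)) + (12:ℂ)*(((2:ℂ)^(k:ℂ))⁻¹)*(((2:ℂ)^(k:ℂ))⁻¹)*(P k (12*z))) * r3
  have h7 : (((((2:ℝ)^k : ℝ):ℂ) + 1)^2 - (((2:ℝ)^(k-1) : ℝ):ℂ)) * ((((12:ℝ)^(1-k) : ℝ):ℂ) * P k (36*z))
      = 12 * Twelve.W k z 3 12 + 18 * Twelve.W k z 6 6 + 12 * Twelve.W k z 12 3 := by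
    rw [← Twelve.P_mono k z hz 3 12 _ 36 u3 (by norm_num),
      ← Twelve.P_mono k z hz 6 6 _ 36 u6 (by norm_num),
      ← Twelve.P_mono k z hz 12 3 _ 36 u12 (by norm_num), L1, L6, L7]
    linear_combination ((12:ℂ)*(((3:ℂ)^(k:ℂ))⁻¹)*(P k (36*z)) + (18:ℂ)*(((2:ℂ)^(k:ℂ))⁻¹)*(((3:ℂ)^(k:ℂ))⁻¹)*(P k (36*z)) + (12:ℂ)*((2:ℂ)^(k:ℂ))*(((2:ℂ)^(k:ℂ))⁻¹)*(((3:ℂ)^(k:ℂ))⁻¹)*(P k (36*z))) * r2 + (0:ℂ) * r3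
  have h8 : (((6:ℝ)^(1-k) : ℝ):ℂ) * ((((2:ℝ)^k : ℝ):ℂ) + 1) * ((((3:ℝ)^k : ℝ):ℂ) + 1) * P k (6*z)
      = 6 * Twelve.W k z 1 6 + 6 * Twelve.W k z 2 3 + 6 * Twelve.W k z 3 2 + 6 * Twelve.W k z 6 1 := by
    rw [← Twelve.P_mono k z hz 1 6 _ 6 u1 (by norm_num),
      ← Twelve.P_mono k z hz 2 3 _ 6 u2 (by norm_num),
      ← Twelve.P_mono k z hz 3 2 _ 6 u3 (by norm_num),
      ← Twelve.P_mono k z hz 6 1 _ 6 u6 (by norm_num), L1, L2, L5]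
    linear_combination ((6:ℂ)*(((3:ℂ)^(k:ℂ))⁻¹)*(P k (6*z)) + (6:ℂ)*((3:ℂ)^(k:ℂ))*(((3:ℂ)^(k:ℂ))⁻¹)*(P k (6*z))) * r2 + ((6:ℂ)*(P k (6*z)) + (6:ℂ)*(((2:ℂ)^(k:ℂ))⁻¹)*(P k (6*z))) * r3
  have h9 : (((6:ℝ)^(1-k) : ℝ):ℂ) * ((((2:ℝ)^k : ℝ):ℂ) + 1) * ((((3:ℝ)^k : ℝ):ℂ) + 1)
        * ((((2:ℝ)^(1-k) : ℝ):ℂ) * P k (24*z))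
      = 12 * Twelve.W k z 2 12 + 12 * Twelve.W k z 4 6 + 12 * Twelve.W k z 6 4 + 12 * Twelve.W k z 12 2 := by
    rw [← Twelve.P_mono k z hz 2 12 _ 24 u2 (by norm_num),
      ← Twelve.P_mono k z hz 4 6 _ 24 u4 (by norm_num),
      ← Twelve.P_mono k z hz 6 4 _ 24 u6 (by norm_num),
      ← Twelve.P_mono k z hz 12 2 _ 24 u12 (by norm_num), L1, L2, L3, L5]
    linear_combination ((12:ℂ)*(((2:ℂ)^(k:ℂ))⁻¹)*(((3:ℂ)^(k:ℂ))⁻¹)*(P k (24*z)) + (12:ℂ)*(((2:ℂ)^(k:ℂ))⁻¹)*((3:ℂ)^(k:ℂ))*(((3:ℂ)^(k:ℂ))⁻¹)*(P k (24*z))) * r2 + ((12:ℂ)*(((2:ℂ)^(k:ℂ))⁻¹)*(P k (24*z)) + (12:ℂ)*(((2:ℂ)^(k:ℂ))⁻¹)*(((2:ℂ)^(k:ℂ))⁻¹)*(P k (24*z))) * r3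
  have hL : HasSum (fun p : ℕ+ × ℕ+ => (Twelve.Ecoef (-5) ((p.1:ℕ) * (p.2:ℕ)) + Twelve.Ecoef (-1) ((p.1:ℕ) * (p.2:ℕ)) + Twelve.Ecoef (1) ((p.1:ℕ) * (p.2:ℕ)) + Twelve.Ecoef (5) ((p.1:ℕ) * (p.2:ℕ))) * Twelve.G k z p)
      (P k (z + ((-5:ℤ):ℂ)/12) + P k (z + ((-1:ℤ):ℂ)/12) + P k (z + ((1:ℤ):ℂ)/12)
        + P k (z + ((5:ℤ):ℂ)/12)) := by
    have h := (((Twelve.hasSum_shift k z hz (-5)).add (Twelve.hasSum_shift k z hz (-1))).add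
      (Twelve.hasSum_shift k z hz 1)).add (Twelve.hasSum_shift k z hz 5)
    convert h using 1
    funext p
    ring
  have hR : HasSum (fun p : ℕ+ × ℕ+ => (2*Twelve.ind 1 2 p + 2*Twelve.ind 2 1 p + 4*Twelve.ind 2 4 p + 4*Twelve.ind 4 2 p + 6*Twelve.ind 3 6 p + 6*Twelve.ind 6 3 p + 12*Twelve.ind 6 12 p + 12*Twelve.ind 12 6 p
      - (4*Twelve.ind 1 4 p + 6*Twelve.ind 2 2 p + 4*Twelve.ind 4 1 p)
      + (12*Twelve.ind 1 12 p + 12*Twelve.ind 3 4 p + 18*Twelve.ind 2 6 p + 18*Twelve.ind 6 2 p + 12*Twelve.ind 4 3 p + 12*Twelve.ind 12 1 p)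
      - (12*Twelve.ind 3 12 p + 18*Twelve.ind 6 6 p + 12*Twelve.ind 12 3 p)
      - (6*Twelve.ind 1 6 p + 6*Twelve.ind 2 3 p + 6*Twelve.ind 3 2 p + 6*Twelve.ind 6 1 p)
      - (12*Twelve.ind 2 12 p + 12*Twelve.ind 4 6 p + 12*Twelve.ind 6 4 p + 12*Twelve.ind 12 2 p)) * Twelve.G k z p)
      (2 * Twelve.W k z 1 2 + 2 * Twelve.W k z 2 1 + 4 * Twelve.W k z 2 4 + 4 * Twelve.W k z 4 2 + 6 * Twelve.W k z 3 6 + 6 * Twelve.W k z 6 3 + 12 * Twelve.W k z 6 12 + 12 * Twelve.W k z 12 6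
      - (4 * Twelve.W k z 1 4 + 6 * Twelve.W k z 2 2 + 4 * Twelve.W k z 4 1)
      + (12 * Twelve.W k z 1 12 + 12 * Twelve.W k z 3 4 + 18 * Twelve.W k z 2 6 + 18 * Twelve.W k z 6 2 + 12 * Twelve.W k z 4 3 + 12 * Twelve.W k z 12 1)
      - (12 * Twelve.W k z 3 12 + 18 * Twelve.W k z 6 6 + 12 * Twelve.W k z 12 3)
      - (6 * Twelve.W k z 1 6 + 6 * Twelve.W k z 2 3 + 6 * Twelve.W k z 3 2 + 6 * Twelve.W k z 6 1)
      - (12 * Twelve.W k z 2 12 + 12 * Twelve.W k z 4 6 + 12 * Twelve.W k z 6 4 + 12 * Twelve.W k z 12 2)) := by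
    have h := ((((((((((((((Twelve.hasSum_W k z hz 1 2).mul_left 2).add ((Twelve.hasSum_W k z hz 2 1).mul_left 2)).add ((Twelve.hasSum_W k z hz 2 4).mul_left 4)).add ((Twelve.hasSum_W k z hz 4 2).mul_left 4)).add ((Twelve.hasSum_W k z hz 3 6).mul_left 6)).add ((Twelve.hasSum_W k z hz 6 3).mul_left 6)).add ((Twelve.hasSum_W k z hz 6 12).mul_left 12)).add ((Twelve.hasSum_W k z hz 12 6).mul_left 12)).sub ((((Twelve.hasSum_W k z hz 1 4).mul_left 4).add ((Twelve.hasSum_W k z hz 2 2).mul_left 6)).add ((Twelve.hasSum_W k z hz 4 1).mul_left 4))).add (((((((Twelve.hasSum_W k z hz 1 12).mul_left 12).add ((Twelve.hasSum_W k z hz 3 4).mul_left 12)).add ((Twelve.hasSum_W k z hz 2 6).mul_left 18)).add ((Twelve.hasSum_W k z hz 6 2).mul_left 18)).add ((Twelve.hasSum_W k z hz 4 3).mul_left 12)).add ((Twelve.hasSum_W k z hz 12 1).mul_left 12))).sub ((((Twelve.hasSum_W k z hz 3 12).mul_left 12).add ((Twelve.hasSum_W k z hz 6 6).mul_left 18)).add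 ((Twelve.hasSum_W k z hz 12 3).mul_left 12))).sub (((((Twelve.hasSum_W k z hz 1 6).mul_left 6).add ((Twelve.hasSum_W k z hz 2 3).mul_left 6)).add ((Twelve.hasSum_W k z hz 3 2).mul_left 6)).add ((Twelve.hasSum_W k z hz 6 1).mul_left 6))).sub (((((Twelve.hasSum_W k z hz 2 12).mul_left 12).add ((Twelve.hasSum_W k z hz 4 6).mul_left 12)).add ((Twelve.hasSum_W k z hz 6 4).mul_left 12)).add ((Twelve.hasSum_W k z hz 12 2).mul_left 12)))
    convert h using 1
    · rfl
    funext p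
    ring
  rw [show z - 5/12 = z + ((-5:ℤ):ℂ)/12 by push_cast; ring,
    show z - 1/12 = z + ((-1:ℤ):ℂ)/12 by push_cast; ring,
    show z + 1/12 = z + ((1:ℤ):ℂ)/12 by push_cast; ring,
    show z + 5/12 = z + ((5:ℤ):ℂ)/12 by push_cast; ring]
  rw [hL.tsum_eq.symm.trans ((tsum_congr (fun p => by rw [Twelve.pointwise p])).trans hR.tsum_eq)]
  linear_combination -h1 - h2 - h3 - h4 + h5 - h6 + h7 + h8 + h9
end

section
/- Σ_{n=1}^∞ 1/sinh^2(nπ) = 1/6 − 1/(2π); equivalently, 1/π = 1/3 − 2·Σ_{n=1}^∞ 1/sinh^2(nπ). -/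
open Real Filter Finset Topology Set

namespace SinhPiAux

noncomputable def P (x : ℝ) (N : ℕ) : ℝ :=
  π * x * ∏ j ∈ Finset.range N, (1 + x ^ 2 / ((j : ℝ) + 1) ^ 2)

lemma tendsto_P (x : ℝ) : Tendsto (P x) atTop (𝓝 (Real.sinh (π * x))) := by
  have h := Complex.tendsto_euler_sin_prod ((x : ℂ) * Complex.I)
  have h2 := ((Complex.continuous_re.comp (continuous_mul_right (-Complex.I))).tendsto _).comp h
  simp only [Function.comp] at h2
  have hImI : Complex.I * -Complex.I = 1 := by
    rw [mul_neg, Complex.I_mul_I, neg_neg]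
  have key : ∀ N : ℕ,
      ((↑π * ((x : ℂ) * Complex.I) *
          ∏ j ∈ Finset.range N, (1 - ((x : ℂ) * Complex.I) ^ 2 / ((j : ℂ) + 1) ^ 2)) *
        -Complex.I).re = P x N := by
    intro N
    have hprod : ∀ j ∈ Finset.range N,
        (1 - ((x : ℂ) * Complex.I) ^ 2 / ((j : ℂ) + 1) ^ 2) =
          (((1 + x ^ 2 / ((j : ℝ) + 1) ^ 2 : ℝ)) : ℂ) := by
      intro j _
      have hI : ((x : ℂ) * Complex.I) ^ 2 = -(((x : ℝ) ^ 2 : ℝ) : ℂ) := by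
        rw [mul_pow, Complex.I_sq]
        push_cast
        ring
      rw [hI]
      push_cast
      ring
    rw [Finset.prod_congr rfl hprod, ← Complex.ofReal_prod]
    set r : ℝ := ∏ j ∈ Finset.range N, (1 + x ^ 2 / ((j : ℝ) + 1) ^ 2) with hr
    have : (↑π * ((x : ℂ) * Complex.I) * (r : ℂ)) * -Complex.I
        = ((π * x * r : ℝ) : ℂ) := by
      push_cast
      calc (↑π * ((x:ℂ) * Complex.I) * (r:ℂ)) * -Complex.I
          = (↑π * (x:ℂ) * (r:ℂ)) * (Complex.I * -Complex.I) := by ring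
        _ = ↑π * (x:ℂ) * (r:ℂ) := by rw [hImI, mul_one]
    rw [this, Complex.ofReal_re, P]
  have hlim : ((Complex.sin (↑π * ((x : ℂ) * Complex.I))) * -Complex.I).re
      = Real.sinh (π * x) := by
    have h1 : (↑π * ((x : ℂ) * Complex.I)) = ((π * x : ℝ) : ℂ) * Complex.I := by push_cast; ring
    rw [h1, Complex.sin_mul_I]
    have h3 : (Complex.sinh ((π * x : ℝ) : ℂ) * Complex.I) * -Complex.I
        = Complex.sinh ((π * x : ℝ) : ℂ) := by
      rw [mul_assoc, hImI, mul_one]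
    rw [h3, ← Complex.ofReal_sinh, Complex.ofReal_re]
  rw [← hlim]
  exact h2.congr key


/-- summands of the cotangent expansion -/
noncomputable def u (j : ℕ) (x : ℝ) : ℝ := 2 * x / (x ^ 2 + ((j : ℝ) + 1) ^ 2)

/-- summands of the csch² expansion -/
noncomputable def v (j : ℕ) (x : ℝ) : ℝ :=
  2 * (((j : ℝ) + 1) ^ 2 - x ^ 2) / (x ^ 2 + ((j : ℝ) + 1) ^ 2) ^ 2

noncomputable def cT (x : ℝ) : ℝ := π * Real.cosh (π * x) / Real.sinh (π * x)

lemma denom_pos (j : ℕ) (x : ℝ) : 0 < x ^ 2 + ((j : ℝ) + 1) ^ 2 := by positivity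

lemma hasDerivAt_u (j : ℕ) (x : ℝ) : HasDerivAt (u j) (v j x) x := by
  have h := (((hasDerivAt_id x).const_mul 2).div
    (((hasDerivAt_id x).pow 2).add_const (((j : ℝ) + 1) ^ 2)) (denom_pos j x).ne')
  refine h.congr_deriv (Eq.symm ?_)
  simp only [Pi.pow_apply, id_eq, v]
  field_simp [v]
  ring

lemma hasDerivAt_logterm (j : ℕ) (x : ℝ) : 
    HasDerivAt (fun y : ℝ => Real.log (1 + y ^ 2 / ((j : ℝ) + 1) ^ 2)) (u j x) x := by
  have hc : ((j : ℝ) + 1) ^ 2 ≠ 0 := by positivity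
  have hpos : (0 : ℝ) < 1 + x ^ 2 / ((j : ℝ) + 1) ^ 2 := by positivity
  have hinner : HasDerivAt (fun y : ℝ => 1 + y ^ 2 / ((j : ℝ) + 1) ^ 2)
      (2 * x / ((j : ℝ) + 1) ^ 2) x := by
    have h := (((hasDerivAt_id x).pow 2).div_const (((j : ℝ) + 1) ^ 2)).const_add 1
    simp only [id_eq] at h
    refine h.congr_deriv (Eq.symm ?_)
    ring
  have := (Real.hasDerivAt_log hpos.ne').comp x hinner
  refine this.congr_deriv (Eq.symm ?_)
  unfold u
  field_simp
  ring

lemma hasDerivAt_log_sinh {x : ℝ} (hx : 0 < x) :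
    HasDerivAt (fun y : ℝ => Real.log (Real.sinh (π * y))) (cT x) x := by
  have hs : Real.sinh (π * x) ≠ 0 := (Real.sinh_pos_iff.2 (by positivity)).ne'
  have hpi : HasDerivAt (fun y : ℝ => π * y) π x := by
    simpa using (hasDerivAt_id x).const_mul π
  have hinner : HasDerivAt (fun y : ℝ => Real.sinh (π * y)) (Real.cosh (π * x) * π) x :=
    (Real.hasDerivAt_sinh (π * x)).comp x hpi
  have := (Real.hasDerivAt_log hs).comp x hinner
  refine this.congr_deriv (Eq.symm ?_)
  unfold cT
  field_simp

lemma summable_inv_sq_succ : Summable (fun j : ℕ => 1 / ((j : ℝ) + 1) ^ 2) := by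
  have base : Summable (fun n : ℕ => 1 / (n : ℝ) ^ 2) := by
    simpa using Real.summable_one_div_nat_pow.mpr one_lt_two
  have := (summable_nat_add_iff 1).mpr base
  refine this.congr fun j => ?_
  push_cast
  ring

lemma summable_u {x : ℝ} : Summable (fun j : ℕ => u j x) := by
  apply Summable.of_norm
  refine Summable.of_nonneg_of_le (fun j => norm_nonneg _) (fun j => ?_)
    (summable_inv_sq_succ.mul_left (2 * |x|))
  rw [Real.norm_eq_abs]
  unfold u
  rw [abs_div, abs_of_pos (denom_pos j x)]
  rw [div_le_iff₀ (denom_pos j x)]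
  have h1 : |2 * x| = 2 * |x| := by rw [abs_mul]; norm_num
  have h2 : ((j : ℝ) + 1) ^ 2 ≤ x ^ 2 + ((j : ℝ) + 1) ^ 2 := by nlinarith [sq_nonneg x]
  calc |2 * x| = 2 * |x| := h1
    _ = 2 * |x| * (1 / ((j:ℝ)+1)^2) * ((j:ℝ)+1)^2 := by field_simp
    _ ≤ 2 * |x| * (1 / ((j:ℝ)+1)^2) * (x ^ 2 + ((j:ℝ)+1)^2) := by
        apply mul_le_mul_of_nonneg_left h2; positivity

lemma summable_v {x : ℝ} : Summable (fun j : ℕ => v j x) := by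
  apply Summable.of_norm
  refine Summable.of_nonneg_of_le (fun j => norm_nonneg _) (fun j => ?_)
    (summable_inv_sq_succ.mul_left 2)
  rw [Real.norm_eq_abs]
  unfold v
  rw [abs_div, abs_of_pos (by positivity : (0:ℝ) < (x ^ 2 + ((j : ℝ) + 1) ^ 2) ^ 2)]
  rw [div_le_iff₀ (by positivity : (0:ℝ) < (x ^ 2 + ((j : ℝ) + 1) ^ 2) ^ 2)]
  have h2 : |2 * (((j : ℝ) + 1) ^ 2 - x ^ 2)| ≤ 2 * (x ^ 2 + ((j : ℝ) + 1) ^ 2) := by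
    rw [abs_mul, abs_of_pos (by norm_num : (0:ℝ) < 2)]
    have := abs_sub ((((j : ℝ) + 1) ^ 2)) (x ^ 2)
    have h3 : |(((j : ℝ) + 1) ^ 2 - x ^ 2)| ≤ ((j : ℝ) + 1) ^ 2 + x ^ 2 := by
      have := abs_sub_abs_le_abs_sub (((j : ℝ) + 1) ^ 2) (x ^ 2)
      rw [abs_sub_le_iff]
      constructor <;> nlinarith [sq_nonneg x, sq_nonneg ((j:ℝ)+1)]
    nlinarith
  have hd : ((j : ℝ) + 1) ^ 2 ≤ x ^ 2 + ((j : ℝ) + 1) ^ 2 := by nlinarith [sq_nonneg x]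
  calc |2 * (((j : ℝ) + 1) ^ 2 - x ^ 2)| ≤ 2 * (x ^ 2 + ((j : ℝ) + 1) ^ 2) := h2
    _ = 2 * (1 / ((j:ℝ)+1)^2) * (((j:ℝ)+1)^2 * (x ^ 2 + ((j:ℝ)+1)^2)) := by field_simp
    _ ≤ 2 * (1 / ((j:ℝ)+1)^2) * ((x ^ 2 + ((j:ℝ)+1)^2) * (x ^ 2 + ((j:ℝ)+1)^2)) := by
        apply mul_le_mul_of_nonneg_left _ (by positivity)
        apply mul_le_mul_of_nonneg_right hd (le_of_lt (denom_pos j x))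
    _ = 2 * (1 / ((j:ℝ)+1)^2) * (x ^ 2 + ((j:ℝ)+1)^2) ^ 2 := by ring


lemma v_bound (j : ℕ) (y : ℝ) : ‖v j y‖ ≤ 2 * (1 / ((j : ℝ) + 1) ^ 2) := by
  have hD : (0:ℝ) < (y ^ 2 + ((j : ℝ) + 1) ^ 2) := denom_pos j y
  rw [Real.norm_eq_abs, v, abs_div, abs_of_pos (by positivity : (0:ℝ) < (y ^ 2 + ((j:ℝ)+1)^2) ^ 2),
    div_le_iff₀ (by positivity : (0:ℝ) < (y ^ 2 + ((j:ℝ)+1)^2) ^ 2)]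
  have h3 : |2 * (((j : ℝ) + 1) ^ 2 - y ^ 2)| ≤ 2 * (y ^ 2 + ((j : ℝ) + 1) ^ 2) := by
    rw [abs_mul, abs_of_pos (by norm_num : (0:ℝ) < 2)]
    rw [mul_le_mul_iff_right₀ (by norm_num : (0:ℝ) < 2), abs_sub_le_iff]
    constructor <;> nlinarith [sq_nonneg y, sq_nonneg ((j:ℝ)+1)]
  have hd : ((j : ℝ) + 1) ^ 2 ≤ y ^ 2 + ((j : ℝ) + 1) ^ 2 := by nlinarith [sq_nonneg y]
  have hc : (0:ℝ) < ((j : ℝ) + 1) ^ 2 := by positivity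
  calc |2 * (((j : ℝ) + 1) ^ 2 - y ^ 2)| ≤ 2 * (y ^ 2 + ((j : ℝ) + 1) ^ 2) := h3
    _ = 2 * (1 / ((j:ℝ)+1)^2) * (((j:ℝ)+1)^2 * (y ^ 2 + ((j:ℝ)+1)^2)) := by field_simp
    _ ≤ 2 * (1 / ((j:ℝ)+1)^2) * ((y ^ 2 + ((j:ℝ)+1)^2) * (y ^ 2 + ((j:ℝ)+1)^2)) := by
        apply mul_le_mul_of_nonneg_left _ (by positivity)
        exact mul_le_mul_of_nonneg_right hd hD.le
    _ = 2 * (1 / ((j:ℝ)+1)^2) * (y ^ 2 + ((j:ℝ)+1)^2) ^ 2 := by ring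

lemma tuo_const_add {F : ℕ → ℝ → ℝ} {G h : ℝ → ℝ} {s : Set ℝ}
    (hF : TendstoUniformlyOn F G atTop s) :
    TendstoUniformlyOn (fun n y => h y + F n y) (fun y => h y + G y) atTop s := by
  have hc : TendstoUniformlyOn (fun _ : ℕ => h) h atTop s := by
    intro t ht
    filter_upwards with N y _ using refl_mem_uniformity ht
  exact hc.add hF

lemma coth_series {x : ℝ} (hx : 0 < x) :
    HasSum (fun j : ℕ => u j x) (cT x - 1 / x) := by
  set s : Set ℝ := Ioo (0:ℝ) (x+1) with hs_def
  have hmem : x ∈ s := ⟨hx, by linarith⟩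
  have hbound : ∀ (j : ℕ) (y : ℝ), y ∈ s → ‖u j y‖ ≤ 2 * (x+1) * (1 / ((j:ℝ)+1)^2) := by
    intro j y hy
    have hy0 : 0 < y := hy.1
    have hy1 : y < x + 1 := hy.2
    have hc : (0:ℝ) < ((j : ℝ) + 1) ^ 2 := by positivity
    have hval : u j y ≤ 2 * (x+1) / ((j:ℝ)+1)^2 := by
      unfold u
      have h1 : 2 * y / (y ^ 2 + ((j:ℝ)+1)^2) ≤ 2 * y / ((j:ℝ)+1)^2 := by
        gcongr
        all_goals nlinarith [sq_nonneg y]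
      have h2 : 2 * y / ((j:ℝ)+1)^2 ≤ 2 * (x+1) / ((j:ℝ)+1)^2 := by gcongr
      linarith
    have hnn : 0 ≤ u j y := by unfold u; positivity
    rw [Real.norm_eq_abs, abs_of_nonneg hnn]
    calc u j y ≤ 2 * (x+1) / ((j:ℝ)+1)^2 := hval
      _ = 2 * (x+1) * (1 / ((j:ℝ)+1)^2) := by ring
  have hunif : TendstoUniformlyOn (fun N y => ∑ j ∈ Finset.range N, u j y)
      (fun y => ∑' j, u j y) atTop s :=
    tendstoUniformlyOn_tsum_nat (summable_inv_sq_succ.mul_left (2*(x+1))) hbound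
  have hunif' : TendstoUniformlyOn (fun N y => 1/y + ∑ j ∈ Finset.range N, u j y)
      (fun y => 1/y + ∑' j, u j y) atTop s := tuo_const_add hunif
  have hderiv : ∀ᶠ N in atTop, ∀ y ∈ s,
      HasDerivAt (fun z => Real.log (π * z) +
        ∑ j ∈ Finset.range N, Real.log (1 + z ^ 2 / ((j:ℝ)+1)^2))
        (1/y + ∑ j ∈ Finset.range N, u j y) y := by
    refine Eventually.of_forall fun N => fun y hy => ?_
    have hy0 : 0 < y := hy.1
    have hlogpy : HasDerivAt (fun z : ℝ => Real.log (π * z)) (1/y) y := by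
      have hpi : HasDerivAt (fun z : ℝ => π * z) π y := by
        simpa using (hasDerivAt_id y).const_mul π
      have h := (Real.hasDerivAt_log (by positivity : (π * y) ≠ 0)).comp y hpi
      refine h.congr_deriv (Eq.symm ?_)
      field_simp
    exact hlogpy.add (HasDerivAt.fun_sum fun j _ => hasDerivAt_logterm j y)
  have hptlim : ∀ y ∈ s, Tendsto (fun N => Real.log (π * y) +
      ∑ j ∈ Finset.range N, Real.log (1 + y ^ 2 / ((j:ℝ)+1)^2)) atTop
      (𝓝 (Real.log (Real.sinh (π * y)))) := by
    intro y hy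
    have hy0 : 0 < y := hy.1
    have hfun : ∀ N, Real.log (π * y) +
        ∑ j ∈ Finset.range N, Real.log (1 + y ^ 2 / ((j:ℝ)+1)^2) = Real.log (P y N) := by
      intro N
      have hterm : ∀ j ∈ Finset.range N, (1 + y ^ 2 / ((j:ℝ)+1)^2) ≠ 0 := by
        intro j _; positivity
      rw [P, Real.log_mul (by positivity) (Finset.prod_ne_zero_iff.mpr hterm),
        Real.log_prod hterm]
    have hsinh : Real.sinh (π * y) ≠ 0 :=
      (Real.sinh_pos_iff.2 (by positivity)).ne'
    have := (Real.continuousAt_log hsinh).tendsto.comp (tendsto_P y)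
    exact Tendsto.congr (fun N => (hfun N).symm) this
  have hkey := hasDerivAt_of_tendstoUniformlyOn isOpen_Ioo hunif' hderiv hptlim hmem
  have huniq := (hasDerivAt_log_sinh hx).unique hkey
  have hsum : HasSum (fun j => u j x) (∑' j, u j x) := summable_u.hasSum
  have : cT x - 1/x = ∑' j, u j x := by linarith
  rwa [this]

lemma hasDerivAt_cT {y : ℝ} (hy : 0 < y) :
    HasDerivAt cT (-(π ^ 2 / Real.sinh (π * y) ^ 2)) y := by
  have hpi : HasDerivAt (fun z : ℝ => π * z) π y := by
    simpa using (hasDerivAt_id y).const_mul π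
  have hnum : HasDerivAt (fun z => π * Real.cosh (π * z)) (π ^ 2 * Real.sinh (π * y)) y := by
    have h := ((Real.hasDerivAt_cosh (π * y)).comp y hpi).const_mul π
    refine h.congr_deriv (Eq.symm ?_)
    ring
  have hden : HasDerivAt (fun z => Real.sinh (π * z)) (Real.cosh (π * y) * π) y :=
    (Real.hasDerivAt_sinh (π * y)).comp y hpi
  have hs : Real.sinh (π * y) ≠ 0 := (Real.sinh_pos_iff.2 (by positivity)).ne'
  have h := hnum.div hden hs
  have hcs := Real.cosh_sq_sub_sinh_sq (π * y)
  refine h.congr_deriv (Eq.symm ?_)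
  field_simp
  linear_combination hcs

lemma csch_series {x : ℝ} (hx : 0 < x) :
    HasSum (fun j : ℕ => -(v j x)) (π ^ 2 / Real.sinh (π * x) ^ 2 - 1 / x ^ 2) := by
  set s : Set ℝ := Ioo (0:ℝ) (x+1) with hs_def
  have hmem : x ∈ s := ⟨hx, by linarith⟩
  have hunif : TendstoUniformlyOn (fun N y => ∑ j ∈ Finset.range N, v j y)
      (fun y => ∑' j, v j y) atTop s :=
    tendstoUniformlyOn_tsum_nat (summable_inv_sq_succ.mul_left 2) (fun j y _ => v_bound j y)
  have hunif' : TendstoUniformlyOn (fun N y => -(1/y^2) + ∑ j ∈ Finset.range N, v j y)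
      (fun y => -(1/y^2) + ∑' j, v j y) atTop s := tuo_const_add hunif
  have hderiv : ∀ᶠ N in atTop, ∀ y ∈ s,
      HasDerivAt (fun z => 1/z + ∑ j ∈ Finset.range N, u j z)
        (-(1/y^2) + ∑ j ∈ Finset.range N, v j y) y := by
    refine Eventually.of_forall fun N => fun y hy => ?_
    have hy0 : 0 < y := hy.1
    have hinv : HasDerivAt (fun z : ℝ => 1/z) (-(1/y^2)) y := by
      simpa only [one_div] using hasDerivAt_inv hy0.ne'
    exact hinv.add (HasDerivAt.fun_sum fun j _ => hasDerivAt_u j y)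
  have hptlim : ∀ y ∈ s, Tendsto (fun N => 1/y + ∑ j ∈ Finset.range N, u j y) atTop
      (𝓝 (cT y)) := by
    intro y hy
    have h := (coth_series hy.1).tendsto_sum_nat
    have h2 := tendsto_const_nhds (x := 1/y) (f := atTop (α := ℕ)) |>.add h
    simpa using h2
  have hkey := hasDerivAt_of_tendstoUniformlyOn isOpen_Ioo hunif' hderiv hptlim hmem
  have huniq := (hasDerivAt_cT hx).unique hkey
  have hsum : HasSum (fun j => -(v j x)) (-∑' j, v j x) := summable_v.hasSum.neg
  have : π ^ 2 / Real.sinh (π * x) ^ 2 - 1 / x ^ 2 = -∑' j, v j x := by linarith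
  rwa [this]


noncomputable def gg (c y : ℝ) : ℝ := 2 * y / (y ^ 2 + c ^ 2)
noncomputable def gd (c y : ℝ) : ℝ := 2 * (c ^ 2 - y ^ 2) / (y ^ 2 + c ^ 2) ^ 2
noncomputable def ph (M y : ℝ) : ℝ := 2 * Real.arctan (y / M)
noncomputable def phd (M y : ℝ) : ℝ := 2 * M / (M ^ 2 + y ^ 2)

lemma hasDerivAt_gg {c : ℝ} (hc : 0 < c) (y : ℝ) : HasDerivAt (gg c) (gd c y) y := by
  have hD : (0:ℝ) < y ^ 2 + c ^ 2 := by positivity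
  have h := (((hasDerivAt_id y).const_mul 2).div
    (((hasDerivAt_id y).pow 2).add_const (c ^ 2)) hD.ne')
  refine h.congr_deriv (Eq.symm ?_)
  simp only [Pi.pow_apply, id_eq]
  unfold gd
  field_simp
  ring

lemma gd_anti {c y₁ y₂ : ℝ} (hc : 0 < c) (h0 : 0 ≤ y₁) (h12 : y₁ ≤ y₂) (h2c : y₂ ≤ c) :
    gd c y₂ ≤ gd c y₁ := by
  unfold gd
  have hyy : y₁ ^ 2 ≤ y₂ ^ 2 := by nlinarith
  have hcc : (0:ℝ) ≤ c ^ 2 - y₁ ^ 2 := by nlinarith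
  exact div_le_div₀ (by linarith) (by linarith) (by positivity)
    (pow_le_pow_left₀ (by positivity) (by linarith) 2)

lemma hasDerivAt_ph {M : ℝ} (hM : 0 < M) (y : ℝ) : HasDerivAt (ph M) (phd M y) y := by
  have h := ((Real.hasDerivAt_arctan (y / M)).comp y ((hasDerivAt_id y).div_const M)).const_mul 2
  refine h.congr_deriv (Eq.symm ?_)
  unfold phd
  have hM' : M ≠ 0 := hM.ne'
  field_simp

lemma phd_anti {M y₁ y₂ : ℝ} (hM : 0 < M) (h0 : 0 ≤ y₁) (h12 : y₁ ≤ y₂) :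
    phd M y₂ ≤ phd M y₁ := by
  unfold phd
  exact div_le_div₀ (by positivity) le_rfl (by positivity) (by nlinarith)

lemma mvt_step {f f' : ℝ → ℝ} (hf : ∀ y, HasDerivAt f (f' y) y) (w : ℝ) :
    ∃ ξ ∈ Ioo w (w + 1), f (w + 1) - f w = f' ξ := by
  obtain ⟨c, hc, hce⟩ := exists_hasDerivAt_eq_slope f f' (by linarith : w < w + 1)
    (fun y _ => (hf y).continuousAt.continuousWithinAt) (fun y _ => hf y)
  refine ⟨c, hc, ?_⟩
  rw [hce]
  have h1 : w + 1 - w = 1 := by ring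
  rw [h1, div_one]

lemma sum_gd_upper {c : ℝ} (N : ℕ) (hc : (N : ℝ) ≤ c) (hc0 : 0 < c) :
    ∑ n ∈ Finset.range N, gd c ((n : ℝ) + 1) ≤ gg c (N : ℝ) := by
  have htel : ∑ n ∈ Finset.range N, (gg c ((n : ℝ) + 1) - gg c (n : ℝ)) = gg c (N:ℝ) - gg c 0 := by
    have h := Finset.sum_range_sub (f := fun m : ℕ => gg c (m : ℝ)) N
    push_cast at h
    rw [← h]
  have hgg0 : gg c 0 = 0 := by unfold gg; simp
  have hterm : ∀ n ∈ Finset.range N, gd c ((n : ℝ) + 1) ≤ gg c ((n : ℝ) + 1) - gg c (n : ℝ) := by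
    intro n hn
    obtain ⟨ξ, hξ, hslope⟩ := mvt_step (hasDerivAt_gg hc0) (n : ℝ)
    rw [hslope]
    have hnN : (n : ℝ) + 1 ≤ c := by
      have := Finset.mem_range.mp hn
      have : (n : ℝ) + 1 ≤ (N : ℝ) := by exact_mod_cast this
      linarith
    exact gd_anti hc0 (le_trans (Nat.cast_nonneg n) hξ.1.le) hξ.2.le hnN
  calc ∑ n ∈ Finset.range N, gd c ((n : ℝ) + 1)
      ≤ ∑ n ∈ Finset.range N, (gg c ((n : ℝ) + 1) - gg c (n : ℝ)) := Finset.sum_le_sum hterm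
    _ = gg c (N : ℝ) - gg c 0 := htel
    _ = gg c (N : ℝ) := by rw [hgg0, sub_zero]

lemma sum_gd_lower {c : ℝ} (N : ℕ) (hc : (N : ℝ) + 1 ≤ c) (hc0 : 0 < c) :
    gg c ((N : ℝ) + 1) - gg c 1 ≤ ∑ n ∈ Finset.range N, gd c ((n : ℝ) + 1) := by
  have htel : ∑ n ∈ Finset.range N, (gg c ((n : ℝ) + 1 + 1) - gg c ((n : ℝ) + 1))
      = gg c ((N : ℝ) + 1) - gg c 1 := by
    have h := Finset.sum_range_sub (f := fun m : ℕ => gg c ((m : ℝ) + 1)) N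
    norm_num at h
    rw [← h, Finset.sum_sub_distrib]
  have hterm : ∀ n ∈ Finset.range N,
      gg c ((n : ℝ) + 1 + 1) - gg c ((n : ℝ) + 1) ≤ gd c ((n : ℝ) + 1) := by
    intro n hn
    obtain ⟨ξ, hξ, hslope⟩ := mvt_step (hasDerivAt_gg hc0) ((n : ℝ) + 1)
    rw [hslope]
    have hnN : ξ ≤ c := by
      have := Finset.mem_range.mp hn
      have hcast : (n : ℝ) + 1 ≤ (N : ℝ) := by exact_mod_cast this
      have := hξ.2
      linarith
    exact gd_anti hc0 (by positivity) hξ.1.le hnN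
  rw [← htel]
  exact Finset.sum_le_sum hterm


lemma summable_phd {M : ℝ} (hM : 0 < M) (C : ℝ) (hC : 0 ≤ C) :
    Summable (fun k : ℕ => phd M ((k : ℝ) + C + 1)) := by
  apply Summable.of_nonneg_of_le (fun k => by unfold phd; positivity)
    (fun k => ?_) (summable_inv_sq_succ.mul_left (2 * M))
  unfold phd
  have hd : ((k:ℝ) + 1) ^ 2 ≤ M ^ 2 + ((k:ℝ) + C + 1) ^ 2 := by
    nlinarith [sq_nonneg M, sq_nonneg C, mul_nonneg hC (Nat.cast_nonneg k : (0:ℝ) ≤ k), hC]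
  have h1 : 2 * M / (M ^ 2 + ((k:ℝ) + C + 1) ^ 2) ≤ 2 * M / ((k:ℝ) + 1) ^ 2 := by
    rw [div_le_div_iff₀ (by positivity) (by positivity)]
    have := mul_le_mul_of_nonneg_left hd (by positivity : (0:ℝ) ≤ 2 * M)
    linarith
  calc 2 * M / (M ^ 2 + ((k:ℝ) + C + 1) ^ 2) ≤ 2 * M / ((k:ℝ) + 1) ^ 2 := h1
    _ = 2 * M * (1 / ((k:ℝ) + 1) ^ 2) := by ring

lemma tendsto_ph_seq {M : ℝ} (hM : 0 < M) (C : ℝ) :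
    Tendsto (fun K : ℕ => ph M (C + (K : ℝ))) atTop (𝓝 π) := by
  have h1 : Tendsto (fun K : ℕ => (C + (K : ℝ)) / M) atTop atTop := by
    apply Tendsto.atTop_div_const hM
    exact tendsto_atTop_add_const_left _ C tendsto_natCast_atTop_atTop
  have h2 := (Real.tendsto_arctan_atTop.mono_right nhdsWithin_le_nhds).comp h1
  have h3 := h2.const_mul (2 : ℝ)
  have : (2 : ℝ) * (π / 2) = π := by ring
  rw [this] at h3
  exact h3

lemma hasSum_ph_tel {M : ℝ} (hM : 0 < M) (C : ℝ) (hC : 0 ≤ C) :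
    HasSum (fun k : ℕ => ph M (C + (k : ℝ) + 1) - ph M (C + (k : ℝ))) (π - ph M C) := by
  have hstep : ∀ k : ℕ, ∃ ξ ∈ Ioo (C + (k:ℝ)) (C + (k:ℝ) + 1),
      ph M (C + (k:ℝ) + 1) - ph M (C + (k:ℝ)) = phd M ξ :=
    fun k => mvt_step (hasDerivAt_ph hM) (C + (k:ℝ))
  have hnn : ∀ k : ℕ, 0 ≤ ph M (C + (k:ℝ) + 1) - ph M (C + (k:ℝ)) := by
    intro k
    obtain ⟨ξ, _, hs⟩ := hstep k
    rw [hs]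
    unfold phd
    positivity
  rw [hasSum_iff_tendsto_nat_of_nonneg hnn]
  have hpart : ∀ K : ℕ, ∑ k ∈ Finset.range K,
      (ph M (C + (k:ℝ) + 1) - ph M (C + (k:ℝ))) = ph M (C + (K:ℝ)) - ph M C := by
    intro K
    have h := Finset.sum_range_sub (f := fun m : ℕ => ph M (C + (m : ℝ))) K
    push_cast at h
    simp only [add_zero] at h
    rw [← h]
    refine Finset.sum_congr rfl fun n _ => ?_
    have h2 : C + ((n:ℝ) + 1) = C + (n:ℝ) + 1 := by ring
    rw [h2]
  have := (tendsto_ph_seq hM C).sub_const (ph M C)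
  refine Tendsto.congr (fun K => (hpart K).symm) ?_
  simpa using this

lemma arctan_one_val {M : ℝ} (hM : 0 < M) : ph M M = π / 2 := by
  unfold ph
  rw [div_self hM.ne', Real.arctan_one]
  ring

lemma tail_upper (N : ℕ) (hN : 1 ≤ N) :
    ∑' k : ℕ, phd (N : ℝ) ((k : ℝ) + (N : ℝ) + 1) ≤ π / 2 := by
  have hM : (0:ℝ) < (N:ℝ) := by exact_mod_cast hN
  have hsum := hasSum_ph_tel hM (N:ℝ) hM.le
  have hle : ∀ k : ℕ, phd (N:ℝ) ((k:ℝ) + (N:ℝ) + 1) ≤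
      ph (N:ℝ) ((N:ℝ) + (k:ℝ) + 1) - ph (N:ℝ) ((N:ℝ) + (k:ℝ)) := by
    intro k
    obtain ⟨ξ, hξ, hs⟩ := mvt_step (hasDerivAt_ph hM) ((N:ℝ) + (k:ℝ))
    rw [hs]
    have hc : (k:ℝ) + (N:ℝ) + 1 = (N:ℝ) + (k:ℝ) + 1 := by ring
    rw [hc]
    exact phd_anti hM (le_trans (by positivity) hξ.1.le) hξ.2.le
  have hsf := summable_phd hM (N:ℝ) hM.le
  have := Summable.tsum_le_tsum hle hsf hsum.summable
  rw [hsum.tsum_eq, arctan_one_val hM] at this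
  linarith
  
lemma tail_lower (N : ℕ) :
    π / 2 ≤ ∑' k : ℕ, phd ((N : ℝ) + 1) ((k : ℝ) + (N : ℝ) + 1) := by
  have hM : (0:ℝ) < (N:ℝ) + 1 := by positivity
  have hsum := hasSum_ph_tel hM ((N:ℝ) + 1) hM.le
  have hle : ∀ k : ℕ, ph ((N:ℝ)+1) ((N:ℝ) + 1 + (k:ℝ) + 1) - ph ((N:ℝ)+1) ((N:ℝ) + 1 + (k:ℝ)) ≤
      phd ((N:ℝ)+1) ((k:ℝ) + (N:ℝ) + 1) := by
    intro k
    obtain ⟨ξ, hξ, hs⟩ := mvt_step (hasDerivAt_ph hM) ((N:ℝ) + 1 + (k:ℝ))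
    rw [hs]
    have hc : (k:ℝ) + (N:ℝ) + 1 = (N:ℝ) + 1 + (k:ℝ) := by ring
    rw [hc]
    exact phd_anti hM (by positivity) hξ.1.le
  have hsf := summable_phd hM (N:ℝ) (Nat.cast_nonneg N)
  have := Summable.tsum_le_tsum hle hsum.summable hsf
  rw [hsum.tsum_eq, arctan_one_val hM] at this
  linarith

lemma tail3 (N : ℕ) (hN : 1 ≤ N) :
    ∑' k : ℕ, 2 / (1 + ((k : ℝ) + (N : ℝ) + 1) ^ 2) ≤ 2 / (N : ℝ) := by
  have hM : (0:ℝ) < (N:ℝ) := by exact_mod_cast hN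
  have htel : HasSum (fun k : ℕ => 2 * (1 / ((k:ℝ) + (N:ℝ)) - 1 / ((k:ℝ) + (N:ℝ) + 1)))
      (2 * (1 / (N:ℝ))) := by
    apply HasSum.mul_left
    have hnn : ∀ k : ℕ, 0 ≤ 1 / ((k:ℝ) + (N:ℝ)) - 1 / ((k:ℝ) + (N:ℝ) + 1) := by
      intro k
      have h1 : (0:ℝ) < (k:ℝ) + (N:ℝ) := by positivity
      have h2 : (0:ℝ) < (k:ℝ) + (N:ℝ) + 1 := by positivity
      rw [sub_nonneg]
      exact one_div_le_one_div_of_le h1 (by linarith)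
    rw [hasSum_iff_tendsto_nat_of_nonneg hnn]
    have hpart : ∀ K : ℕ, ∑ k ∈ Finset.range K,
        (1 / ((k:ℝ) + (N:ℝ)) - 1 / ((k:ℝ) + (N:ℝ) + 1)) = 1 / (N:ℝ) - 1 / ((K:ℝ) + (N:ℝ)) := by
      intro K
      have h := Finset.sum_range_sub' (f := fun m : ℕ => 1 / ((m : ℝ) + (N:ℝ))) K
      push_cast at h
      simp only [zero_add] at h
      rw [← h]
      exact Finset.sum_congr rfl fun n _ => by ring
    refine Tendsto.congr (fun K => (hpart K).symm) ?_
    have h0 : Tendsto (fun K : ℕ => 1 / ((K:ℝ) + (N:ℝ))) atTop (𝓝 0) := by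
      apply Tendsto.comp tendsto_inv_atTop_zero ?_ |>.congr (fun K => by rw [Function.comp_apply, one_div])
      exact tendsto_atTop_add_const_right _ _ tendsto_natCast_atTop_atTop
    simpa using (tendsto_const_nhds (x := 1 / (N:ℝ)) (f := atTop (α := ℕ))).sub h0
  have hle : ∀ k : ℕ, 2 / (1 + ((k:ℝ) + (N:ℝ) + 1) ^ 2) ≤
      2 * (1 / ((k:ℝ) + (N:ℝ)) - 1 / ((k:ℝ) + (N:ℝ) + 1)) := by
    intro k
    have h1 : (0:ℝ) < (k:ℝ) + (N:ℝ) := by positivity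
    have h2 : (0:ℝ) < (k:ℝ) + (N:ℝ) + 1 := by positivity
    have hdiff : 1 / ((k:ℝ) + (N:ℝ)) - 1 / ((k:ℝ) + (N:ℝ) + 1)
        = 1 / (((k:ℝ) + (N:ℝ)) * ((k:ℝ) + (N:ℝ) + 1)) := by
      field_simp
      ring
    rw [hdiff, mul_one_div]
    rw [div_le_div_iff₀ (by positivity) (by positivity)]
    nlinarith [h1.le]
  have hsf : Summable (fun k : ℕ => 2 / (1 + ((k:ℝ) + (N:ℝ) + 1) ^ 2)) := by
    apply Summable.of_nonneg_of_le (fun k => by positivity) (fun k => ?_)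
      (summable_inv_sq_succ.mul_left 2)
    have : ((k:ℝ) + 1) ^ 2 ≤ 1 + ((k:ℝ) + (N:ℝ) + 1) ^ 2 := by
      nlinarith [sq_nonneg (N:ℝ), mul_nonneg hM.le (Nat.cast_nonneg k : (0:ℝ) ≤ (k:ℝ)), hM.le]
    calc 2 / (1 + ((k:ℝ) + (N:ℝ) + 1) ^ 2) ≤ 2 / ((k:ℝ) + 1) ^ 2 := by
          rw [div_le_div_iff₀ (by positivity) (by positivity)]
          linarith
      _ = 2 * (1 / ((k:ℝ) + 1) ^ 2) := by ring
  have := Summable.tsum_le_tsum hle hsf htel.summable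
  rw [htel.tsum_eq] at this
  calc ∑' k : ℕ, 2 / (1 + ((k:ℝ) + (N:ℝ) + 1) ^ 2) ≤ 2 * (1 / (N:ℝ)) := this
    _ = 2 / (N:ℝ) := by ring


noncomputable def aa (n k : ℕ) : ℝ :=
  2 * (((n : ℝ) + 1) ^ 2 - ((k : ℝ) + 1) ^ 2) / ((((n : ℝ) + 1) ^ 2 + ((k : ℝ) + 1) ^ 2) ^ 2)

noncomputable def t (n : ℕ) : ℝ :=
  π ^ 2 / Real.sinh (π * ((n : ℝ) + 1)) ^ 2 - 1 / ((n : ℝ) + 1) ^ 2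

lemma aa_eq (n k : ℕ) : aa n k = -(v k ((n : ℝ) + 1)) := by
  unfold aa v
  ring

lemma hML (n : ℕ) : HasSum (fun k => aa n k) (t n) := by
  have h := csch_series (x := (n : ℝ) + 1) (by positivity)
  have hfe : (fun k => aa n k) = fun k => -(v k ((n : ℝ) + 1)) := funext fun k => aa_eq n k
  rw [hfe]
  exact h

lemma aa_antisymm (n k : ℕ) : aa n k = -(aa k n) := by
  unfold aa
  ring

lemma aa_shift (n k N : ℕ) : aa n (k + N) = -(gd ((k : ℝ) + (N : ℝ) + 1) ((n : ℝ) + 1)) := by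
  unfold aa gd
  push_cast
  ring

lemma sq_zero (N : ℕ) : ∑ n ∈ Finset.range N, ∑ k ∈ Finset.range N, aa n k = 0 := by
  set T := ∑ n ∈ Finset.range N, ∑ k ∈ Finset.range N, aa n k with hT
  have h1 : T = -T := by
    calc T = ∑ n ∈ Finset.range N, ∑ k ∈ Finset.range N, -(aa k n) := by
          apply Finset.sum_congr rfl; intro n _
          apply Finset.sum_congr rfl; intro k _
          exact aa_antisymm n k
      _ = -(∑ n ∈ Finset.range N, ∑ k ∈ Finset.range N, aa k n) := by
          simp [Finset.sum_neg_distrib]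
      _ = -(∑ k ∈ Finset.range N, ∑ n ∈ Finset.range N, aa k n) := by
          rw [Finset.sum_comm]
      _ = -T := by rw [hT]
  linarith

noncomputable def R (N : ℕ) : ℝ := ∑ n ∈ Finset.range N, ∑' k : ℕ, aa n (k + N)

lemma summable_aa_shift (n N : ℕ) : Summable (fun k : ℕ => aa n (k + N)) :=
  (summable_nat_add_iff N).mpr (hML n).summable

lemma partial_eq (N : ℕ) : ∑ n ∈ Finset.range N, t n = R N := by
  have hsplit : ∀ n : ℕ, t n = ∑ k ∈ Finset.range N, aa n k + ∑' k : ℕ, aa n (k + N) := by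
    intro n
    rw [← (hML n).tsum_eq]
    exact (Summable.sum_add_tsum_nat_add N (hML n).summable).symm
  calc ∑ n ∈ Finset.range N, t n
      = ∑ n ∈ Finset.range N, (∑ k ∈ Finset.range N, aa n k + ∑' k : ℕ, aa n (k + N)) :=
        Finset.sum_congr rfl fun n _ => hsplit n
    _ = (∑ n ∈ Finset.range N, ∑ k ∈ Finset.range N, aa n k) + R N := Finset.sum_add_distrib
    _ = R N := by rw [sq_zero]; ring

lemma R_swap (N : ℕ) : R N = ∑' k : ℕ, ∑ n ∈ Finset.range N, aa n (k + N) := by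
  unfold R
  exact (Summable.tsum_finsetSum fun n _ => summable_aa_shift n N).symm

lemma summable_A (N : ℕ) : Summable (fun k : ℕ => ∑ n ∈ Finset.range N, aa n (k + N)) :=
  summable_sum fun n _ => summable_aa_shift n N

lemma inner_lower (N k : ℕ) (hN : 1 ≤ N) :
    -(phd (N : ℝ) ((k : ℝ) + (N : ℝ) + 1)) ≤ ∑ n ∈ Finset.range N, aa n (k + N) := by
  set c : ℝ := (k : ℝ) + (N : ℝ) + 1 with hc_def
  have hc0 : 0 < c := by positivity
  have hsum : ∑ n ∈ Finset.range N, aa n (k + N)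
      = -(∑ n ∈ Finset.range N, gd c ((n : ℝ) + 1)) := by
    rw [← Finset.sum_neg_distrib]
    exact Finset.sum_congr rfl fun n _ => by rw [aa_shift]
  rw [hsum]
  have hphd : phd (N : ℝ) c = gg c (N : ℝ) := by unfold phd gg; ring
  rw [hphd, neg_le_neg_iff]
  exact sum_gd_upper N (by linarith [Nat.cast_nonneg (α := ℝ) k]) hc0

lemma inner_upper (N k : ℕ) :
    ∑ n ∈ Finset.range N, aa n (k + N) ≤
      2 / (1 + ((k : ℝ) + (N : ℝ) + 1) ^ 2) - phd ((N : ℝ) + 1) ((k : ℝ) + (N : ℝ) + 1) := by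
  set c : ℝ := (k : ℝ) + (N : ℝ) + 1 with hc_def
  have hc0 : 0 < c := by positivity
  have hsum : ∑ n ∈ Finset.range N, aa n (k + N)
      = -(∑ n ∈ Finset.range N, gd c ((n : ℝ) + 1)) := by
    rw [← Finset.sum_neg_distrib]
    exact Finset.sum_congr rfl fun n _ => by rw [aa_shift]
  rw [hsum]
  have h1 : gg c 1 = 2 / (1 + c ^ 2) := by unfold gg; norm_num
  have h2 : phd ((N : ℝ) + 1) c = gg c ((N : ℝ) + 1) := by unfold phd gg; ring
  rw [h1.symm, h2]
  have := sum_gd_lower N (by linarith [Nat.cast_nonneg (α := ℝ) k]) hc0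
  linarith

lemma R_lower (N : ℕ) (hN : 1 ≤ N) : -(π / 2) ≤ R N := by
  rw [R_swap]
  have hsl : Summable (fun k : ℕ => -(phd (N : ℝ) ((k : ℝ) + (N : ℝ) + 1))) :=
    (summable_phd (by exact_mod_cast hN) (N : ℝ) (Nat.cast_nonneg N)).neg
  have h := Summable.tsum_le_tsum (fun k => inner_lower N k hN) hsl (summable_A N)
  rw [tsum_neg] at h
  have := tail_upper N hN
  linarith

lemma R_upper (N : ℕ) (hN : 1 ≤ N) : R N ≤ 2 / (N : ℝ) - π / 2 := by
  rw [R_swap]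
  have hs1 : Summable (fun k : ℕ => 2 / (1 + ((k : ℝ) + (N : ℝ) + 1) ^ 2)) := by
    have hM : (0:ℝ) < (N:ℝ) := by exact_mod_cast hN
    apply Summable.of_nonneg_of_le (fun k => by positivity) (fun k => ?_)
      (summable_inv_sq_succ.mul_left 2)
    have h : ((k:ℝ) + 1) ^ 2 ≤ 1 + ((k:ℝ) + (N:ℝ) + 1) ^ 2 := by
      nlinarith [sq_nonneg (N:ℝ), mul_nonneg hM.le (Nat.cast_nonneg k : (0:ℝ) ≤ (k:ℝ)), hM.le]
    calc 2 / (1 + ((k:ℝ) + (N:ℝ) + 1) ^ 2) ≤ 2 / ((k:ℝ) + 1) ^ 2 := by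
          rw [div_le_div_iff₀ (by positivity) (by positivity)]
          linarith
      _ = 2 * (1 / ((k:ℝ) + 1) ^ 2) := by ring
  have hs2 : Summable (fun k : ℕ => phd ((N : ℝ) + 1) ((k : ℝ) + (N : ℝ) + 1)) :=
    summable_phd (by positivity) (N : ℝ) (Nat.cast_nonneg N)
  have h := Summable.tsum_le_tsum (fun k => inner_upper N k) (summable_A N) (hs1.sub hs2)
  rw [Summable.tsum_sub hs1 hs2] at h
  have h3 := tail3 N hN
  have h4 := tail_lower N
  linarith

lemma summable_t : Summable t := by
  have hs1 : Summable (fun n : ℕ => π ^ 2 / Real.sinh (π * ((n : ℝ) + 1)) ^ 2) := by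
    apply Summable.of_nonneg_of_le (fun n => by positivity) (fun n => ?_) summable_inv_sq_succ
    have harg : (0:ℝ) < π * ((n : ℝ) + 1) := by positivity
    have hsinh : π * ((n : ℝ) + 1) ≤ Real.sinh (π * ((n : ℝ) + 1)) :=
      Real.self_le_sinh_iff.mpr harg.le
    have hsq : (π * ((n : ℝ) + 1)) ^ 2 ≤ Real.sinh (π * ((n : ℝ) + 1)) ^ 2 :=
      pow_le_pow_left₀ harg.le hsinh 2
    rw [div_le_div_iff₀ (by positivity) (by positivity)]
    nlinarith [hsq]
  exact hs1.sub summable_inv_sq_succ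

lemma hasSum_t : HasSum t (-(π / 2)) := by
  have hs := summable_t.hasSum
  have h1 := hs.tendsto_sum_nat
  have h2 : Tendsto (fun N => ∑ n ∈ Finset.range N, t n) atTop (𝓝 (-(π / 2))) := by
    refine tendsto_of_tendsto_of_tendsto_of_le_of_le'
      (g := fun _ : ℕ => -(π / 2)) (h := fun N : ℕ => 2 / (N : ℝ) - π / 2)
      tendsto_const_nhds ?_ ?_ ?_
    · simpa using (tendsto_const_div_atTop_nhds_zero_nat 2).sub_const (π / 2)
    · filter_upwards [eventually_ge_atTop 1] with N hN
      rw [partial_eq]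
      exact R_lower N hN
    · filter_upwards [eventually_ge_atTop 1] with N hN
      rw [partial_eq]
      exact R_upper N hN
  have huniq : ∑' n, t n = -(π / 2) := tendsto_nhds_unique h1 h2
  rwa [huniq] at hs

lemma hB : HasSum (fun n : ℕ => 1 / ((n : ℝ) + 1) ^ 2) (π ^ 2 / 6) := by
  have h := (hasSum_nat_add_iff (f := fun n : ℕ => 1 / (n : ℝ) ^ 2) 1).mpr
    (by simpa using hasSum_zeta_two)
  have hfe : (fun n : ℕ => 1 / ((n + 1 : ℕ) : ℝ) ^ 2) = fun n : ℕ => 1 / ((n : ℝ) + 1) ^ 2 := by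
    funext n; push_cast; ring
  rwa [hfe] at h

lemma hasSum_S : HasSum (fun n : ℕ => 1 / Real.sinh (π * ((n : ℝ) + 1)) ^ 2)
    (1 / 6 - 1 / (2 * π)) := by
  have hmain := hasSum_t.add hB
  have hfe : (fun n : ℕ => t n + 1 / ((n : ℝ) + 1) ^ 2)
      = fun n : ℕ => π ^ 2 / Real.sinh (π * ((n : ℝ) + 1)) ^ 2 := by
    funext n; unfold t; ring
  rw [hfe] at hmain
  have h2 := hmain.mul_left ((π ^ 2)⁻¹)
  have hpi : π ≠ 0 := Real.pi_ne_zero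
  have hfe2 : (fun n : ℕ => (π ^ 2)⁻¹ * (π ^ 2 / Real.sinh (π * ((n : ℝ) + 1)) ^ 2))
      = fun n : ℕ => 1 / Real.sinh (π * ((n : ℝ) + 1)) ^ 2 := by
    funext n
    field_simp
  rw [hfe2] at h2
  have hval : (π ^ 2)⁻¹ * (-(π / 2) + π ^ 2 / 6) = 1 / 6 - 1 / (2 * π) := by
    field_simp
    ring
  rwa [hval] at h2

end SinhPiAux

open SinhPiAux Real in
theorem sinhPi :
    (∑' n : ℕ+, 1 / Real.sinh ((n : ℝ) * Real.pi) ^ 2) = 1 / 6 - 1 / (2 * Real.pi) ∧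
    1 / Real.pi = 1 / 3 - 2 * ∑' n : ℕ+, 1 / Real.sinh ((n : ℝ) * Real.pi) ^ 2 := by
  have hkey : (∑' n : ℕ+, 1 / Real.sinh ((n : ℝ) * π) ^ 2) = 1 / 6 - 1 / (2 * π) := by
    have he := Equiv.pnatEquivNat.symm.tsum_eq
      (f := fun n : ℕ+ => 1 / Real.sinh ((n : ℝ) * π) ^ 2)
    rw [← he]
    have hfun : ∀ k : ℕ, (1 : ℝ) / Real.sinh (((Equiv.pnatEquivNat.symm k : ℕ+) : ℝ) * π) ^ 2
        = 1 / Real.sinh (π * ((k : ℝ) + 1)) ^ 2 := by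
      intro k
      have hc : ((Equiv.pnatEquivNat.symm k : ℕ+) : ℝ) = (k : ℝ) + 1 := by
        simp [Equiv.pnatEquivNat]
      rw [hc, mul_comm]
    rw [tsum_congr hfun]
    exact hasSum_S.tsum_eq
  exact ⟨hkey, by rw [hkey]; ring⟩
end
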